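/- arXiv:1802.09045 — 6 statements merged into one kernel-verified Lean document; each statement's English description precedes it below -/
import Mathlib

section
/- Let α∈(0,1) and let z∈ℂ with 0<arg(z)<π. Then the improper integral ∫₀^∞ t^α/(t²−z²) dt converges and equals z^{α−1}·(π/(2cos(πα/2)))·e^{(1−α)πi/2}, where z^{α−1} is taken with the principal branch. For z with −π<arg(z)<0 the same formula holds with e^{−(1−α)πi/2} in place of e^{(1−α)πi/2}. -/
open MeasureTheory Set Complex
open scoped Real Topology

lemma base_integrable {α : ℝ} (h0 : 0 < α) (h1 : α < 1) :
    IntegrableOn (fun t : ℝ => t ^ α / (1 + t ^ 2)) (Ioi 0) := by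
  have hmeas : AEStronglyMeasurable (fun t : ℝ => t ^ α / (1 + t ^ 2)) :=
    Measurable.aestronglyMeasurable (by fun_prop)
  have hIoc : IntegrableOn (fun t : ℝ => t ^ α / (1 + t ^ 2)) (Ioc 0 1) := by
    have hg : IntegrableOn (fun t : ℝ => t ^ α) (Ioc 0 1) := by
      rw [integrableOn_Ioc_iff_integrableOn_Ioo]
      exact (intervalIntegral.integrableOn_Ioo_rpow_iff zero_lt_one).2 (by linarith)
    refine Integrable.mono hg (hmeas.restrict) ?_
    filter_upwards [ae_restrict_mem measurableSet_Ioc] with t ht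
    have htpos : 0 < t := ht.1
    have h2 : (0:ℝ) < 1 + t ^ 2 := by positivity
    rw [Real.norm_eq_abs, Real.norm_eq_abs, _root_.abs_of_nonneg (show (0:ℝ) ≤ t ^ α / (1+t^2) by positivity),
      _root_.abs_of_nonneg (Real.rpow_nonneg htpos.le _)]
    exact div_le_self (Real.rpow_nonneg htpos.le _) (by nlinarith)
  have hIoi : IntegrableOn (fun t : ℝ => t ^ α / (1 + t ^ 2)) (Ioi 1) := by
    have hg : IntegrableOn (fun t : ℝ => t ^ (α - 2)) (Ioi 1) :=
      integrableOn_Ioi_rpow_of_lt (by linarith) zero_lt_one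
    refine Integrable.mono hg (hmeas.restrict) ?_
    filter_upwards [ae_restrict_mem measurableSet_Ioi] with t ht
    have htpos : (0:ℝ) < t := lt_trans zero_lt_one ht
    have h2 : (0:ℝ) < 1 + t ^ 2 := by positivity
    rw [Real.norm_eq_abs, Real.norm_eq_abs, _root_.abs_of_nonneg (show (0:ℝ) ≤ t ^ α / (1+t^2) by positivity),
      _root_.abs_of_nonneg (Real.rpow_nonneg htpos.le _)]
    have : t ^ (α - 2) = t ^ α / t ^ 2 := by
      rw [Real.rpow_sub htpos, Real.rpow_two]
    rw [this]
    apply div_le_div_of_nonneg_left (Real.rpow_nonneg htpos.le _) (by positivity)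
    nlinarith
  have : Ioc (0:ℝ) 1 ∪ Ioi 1 = Ioi 0 := Ioc_union_Ioi_eq_Ioi zero_le_one
  rw [← this]
  exact hIoc.union hIoi

lemma denom_bound {w₀ : ℂ} (hw : w₀ ∈ slitPlane) :
    ∃ ε > 0, ∃ c > 0, ∀ w ∈ Metric.ball w₀ ε, ∀ t : ℝ, 0 ≤ t →
      c * (1 + t ^ 2) ≤ ‖(t : ℂ) ^ 2 + w‖ := by
  set m : ℝ := if w₀.im = 0 then w₀.re else |w₀.im| with hm
  have hm0 : 0 < m := by
    rw [hm]; split_ifs with h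
    · rcases hw with h' | h'
      · exact h'
      · exact absurd h h'
    · exact abs_pos.2 h
  have hbase : ∀ t : ℝ, 0 ≤ t → m ≤ ‖(t : ℂ) ^ 2 + w₀‖ := by
    intro t ht
    rw [hm]; split_ifs with h
    · calc w₀.re ≤ t ^ 2 + w₀.re := by nlinarith
      _ = ((t : ℂ) ^ 2 + w₀).re := by
          simp [Complex.add_re, ← Complex.ofReal_pow]
      _ ≤ |((t : ℂ) ^ 2 + w₀).re| := le_abs_self _
      _ ≤ ‖(t : ℂ) ^ 2 + w₀‖ := Complex.abs_re_le_norm _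
    · have h1 : |w₀.im| = |((t : ℂ) ^ 2 + w₀).im| := by
        simp [Complex.add_im, ← Complex.ofReal_pow]
      rw [h1]; exact Complex.abs_im_le_norm _
  set δ : ℝ := min m 1 / 2 with hδ
  have hδ0 : 0 < δ := by positivity
  have hδ1 : δ ≤ 1 / 2 := by
    rw [hδ]; have := min_le_right m 1; linarith
  set K : ℝ := ‖w₀‖ + 1 with hK
  have hK1 : 1 ≤ K := by have := norm_nonneg w₀; rw [hK]; linarith
  refine ⟨δ, hδ0, δ / (4 * K), by positivity, fun w hwball t ht => ?_⟩
  have hwK : ‖w‖ ≤ K := by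
    have h1 : ‖w - w₀‖ < δ := by
      rwa [Metric.mem_ball, Complex.dist_eq] at hwball
    calc ‖w‖ = ‖w₀ + (w - w₀)‖ := by ring_nf
    _ ≤ ‖w₀‖ + ‖w - w₀‖ := norm_add_le _ _
    _ ≤ K := by rw [hK]; linarith
  have hlow : δ ≤ ‖(t : ℂ) ^ 2 + w‖ := by
    have h1 : ‖w - w₀‖ < δ := by
      rwa [Metric.mem_ball, Complex.dist_eq] at hwball
    have h2 : m ≤ ‖(t : ℂ) ^ 2 + w₀‖ := hbase t ht
    have h3 : ‖(t : ℂ) ^ 2 + w₀‖ ≤ ‖(t : ℂ) ^ 2 + w‖ + ‖w - w₀‖ := by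
      calc ‖(t : ℂ) ^ 2 + w₀‖ = ‖((t : ℂ) ^ 2 + w) - (w - w₀)‖ := by ring_nf
      _ ≤ _ := norm_sub_le _ _
    have hmδ : 2 * δ ≤ m := by
      rw [hδ]; have := min_le_left m 1; have h := min_le_right m 1
      rcases le_total m 1 with h' | h'
      · rw [min_eq_left h']; linarith
      · rw [min_eq_right h']; linarith
    linarith
  have hhigh : t ^ 2 - K ≤ ‖(t : ℂ) ^ 2 + w‖ := by
    have : ‖(t:ℂ)^2‖ - ‖w‖ ≤ ‖(t : ℂ) ^ 2 + w‖ := by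
      have := norm_sub_le ((t:ℂ)^2 + w) w
      simp only [add_sub_cancel_right] at this
      linarith
    have habs : ‖(t:ℂ)^2‖ = t ^ 2 := by
      rw [norm_pow, Complex.norm_real, Real.norm_eq_abs, _root_.abs_of_nonneg ht]
    linarith [habs ▸ this, hwK]
  rcases le_or_gt (t ^ 2) (2 * K) with hcase | hcase
  · have step1 : δ / (4 * K) * (1 + t ^ 2) ≤ δ := by
      rw [div_mul_eq_mul_div, div_le_iff₀ (by positivity)]
      nlinarith [hδ0.le]
    linarith
  · have h4 : (1 : ℝ) ≤ t ^ 2 := by nlinarith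
    have step1 : δ / (4 * K) * (1 + t ^ 2) ≤ (1 / 4) * (1 + t ^ 2) := by
      apply mul_le_mul_of_nonneg_right _ (by positivity)
      rw [div_le_iff₀ (by positivity)]; nlinarith [hδ1]
    have step2 : (1 / 4 : ℝ) * (1 + t ^ 2) ≤ t ^ 2 - K := by nlinarith
    linarith

lemma cx_meas (α : ℝ) (w : ℂ) :
    AEStronglyMeasurable (fun t : ℝ => ((t ^ α : ℝ) : ℂ) / ((t : ℂ) ^ 2 + w))
      (volume.restrict (Ioi 0)) := by
  apply Measurable.aestronglyMeasurable
  fun_prop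

lemma cx_integrable {α : ℝ} (h0 : 0 < α) (h1 : α < 1) {w : ℂ} (hw : w ∈ slitPlane) :
    IntegrableOn (fun t : ℝ => ((t ^ α : ℝ) : ℂ) / ((t : ℂ) ^ 2 + w)) (Ioi 0) := by
  obtain ⟨ε, hε, c, hc, hb⟩ := denom_bound hw
  refine Integrable.mono ((base_integrable h0 h1).const_mul c⁻¹) (cx_meas α w) ?_
  filter_upwards [ae_restrict_mem measurableSet_Ioi] with t ht
  have htpos : (0:ℝ) < t := ht
  have hbt := hb w (Metric.mem_ball_self hε) t htpos.le
  have habs : (0:ℝ) < c * (1 + t ^ 2) := by positivity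
  have hden : (0:ℝ) < ‖(t : ℂ) ^ 2 + w‖ := lt_of_lt_of_le habs hbt
  rw [norm_div, Complex.norm_real, Real.norm_eq_abs,
    _root_.abs_of_nonneg (Real.rpow_nonneg htpos.le _)]
  rw [Real.norm_eq_abs, _root_.abs_of_nonneg (by positivity : (0:ℝ) ≤ c⁻¹ * (t ^ α / (1 + t ^ 2)))]
  rw [div_le_iff₀ hden]
  have : c⁻¹ * (t ^ α / (1 + t ^ 2)) * (c * (1 + t ^ 2)) = t ^ α := by
    field_simp
  calc t ^ α = c⁻¹ * (t ^ α / (1 + t ^ 2)) * (c * (1 + t ^ 2)) := this.symm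
  _ ≤ _ := by
      apply mul_le_mul_of_nonneg_left hbt (by positivity)

lemma cx_deriv {α : ℝ} (h0 : 0 < α) (h1 : α < 1) {w₀ : ℂ} (hw : w₀ ∈ slitPlane) :
    HasDerivAt (fun w : ℂ => ∫ t in Ioi (0:ℝ), ((t ^ α : ℝ) : ℂ) / ((t : ℂ) ^ 2 + w))
      (∫ t in Ioi (0:ℝ), -(((t ^ α : ℝ) : ℂ) / ((t : ℂ) ^ 2 + w₀) ^ 2)) w₀ := by
  obtain ⟨ε, hε, c, hc, hb⟩ := denom_bound hw
  have main := hasDerivAt_integral_of_dominated_loc_of_deriv_le (μ := volume.restrict (Ioi 0))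
    (F := fun w (t : ℝ) => ((t ^ α : ℝ) : ℂ) / ((t : ℂ) ^ 2 + w))
    (F' := fun w (t : ℝ) => -(((t ^ α : ℝ) : ℂ) / ((t : ℂ) ^ 2 + w) ^ 2))
    (x₀ := w₀) (bound := fun t => (c⁻¹)^2 * (t ^ α / (1 + t ^ 2)))
    (Metric.ball_mem_nhds w₀ hε) (Filter.Eventually.of_forall fun w => cx_meas α w) (cx_integrable h0 h1 hw)
    ?_ ?_ ?_ ?_
  · exact main.2
  · apply Measurable.aestronglyMeasurable; fun_prop
  · filter_upwards [ae_restrict_mem measurableSet_Ioi] with t ht w hwball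
    have htpos : (0:ℝ) < t := ht
    have hbt := hb w hwball t htpos.le
    have habs : (0:ℝ) < c * (1 + t ^ 2) := by positivity
    have hden : (0:ℝ) < ‖(t : ℂ) ^ 2 + w‖ := lt_of_lt_of_le habs hbt
    rw [norm_neg, norm_div, Complex.norm_real, Real.norm_eq_abs,
      _root_.abs_of_nonneg (Real.rpow_nonneg htpos.le _), norm_pow]
    rw [div_le_iff₀ (by positivity)]
    have key : (c * (1 + t ^ 2)) ^ 2 ≤ ‖(t : ℂ) ^ 2 + w‖ ^ 2 := by
      apply pow_le_pow_left₀ habs.le hbt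
    have hone : (1:ℝ) ≤ 1 + t ^ 2 := by nlinarith
    calc t ^ α = (c⁻¹)^2 * (t ^ α / (1 + t ^ 2)) * ((c * (1+t^2))^2 / (1 + t^2)) := by
          rw [mul_pow, inv_pow]
          have h2 : (0:ℝ) < 1 + t ^ 2 := by positivity
          have ht0 : t ≠ 0 := ne_of_gt htpos
          field_simp
    _ ≤ (c⁻¹)^2 * (t ^ α / (1 + t ^ 2)) * (c * (1+t^2))^2 := by
          apply mul_le_mul_of_nonneg_left _ (by positivity)
          apply div_le_self (by positivity) hone
    _ ≤ _ := by
          apply mul_le_mul_of_nonneg_left key (by positivity)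
  · exact ((base_integrable h0 h1).const_mul _)
  · filter_upwards [ae_restrict_mem measurableSet_Ioi] with t ht w hwball
    have htpos : (0:ℝ) < t := ht
    have hbt := hb w hwball t htpos.le
    have habs : (0:ℝ) < c * (1 + t ^ 2) := by positivity
    have hne : ((t : ℂ) ^ 2 + w) ≠ 0 := by
      intro h
      rw [h] at hbt; simp at hbt; nlinarith
    have hd : HasDerivAt (fun w : ℂ => (t : ℂ) ^ 2 + w) 1 w := by
      simpa using (hasDerivAt_id w).const_add ((t:ℂ)^2)
    have := (hasDerivAt_const w ((t ^ α : ℝ) : ℂ)).div hd hne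
    convert this using 1
    · rfl
    · rfl
    · ring

lemma J_eval {s : ℝ} (h0 : 0 < s) (h1 : s < 1) :
    ∫ y in Ioi (0:ℝ), y ^ (s - 1) / (1 + y) = π / Real.sin (π * s) := by
  have himg : (fun x : ℝ => x / (1 - x)) '' (Ioo 0 1) = Ioi 0 := by
    ext y
    constructor
    · rintro ⟨x, hx, rfl⟩
      have h1x : 0 < 1 - x := by linarith [hx.2]
      exact div_pos hx.1 h1x
    · intro hy
      refine ⟨y / (1 + y), ⟨?_, ?_⟩, ?_⟩
      · exact div_pos hy (by linarith [mem_Ioi.1 hy])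
      · rw [div_lt_one (by linarith [mem_Ioi.1 hy])]; linarith [mem_Ioi.1 hy]
      · have h1y : (0:ℝ) < 1 + y := by linarith [mem_Ioi.1 hy]
        field_simp
        ring
  have hderiv : ∀ x ∈ Ioo (0:ℝ) 1, HasDerivWithinAt (fun x : ℝ => x / (1 - x))
      ((1 - x)⁻¹ ^ 2) (Ioo 0 1) x := by
    intro x hx
    have h1x : (1:ℝ) - x ≠ 0 := by intro h; have := hx.2; nlinarith [hx.2]
    have := (hasDerivAt_id x).div ((hasDerivAt_id x).const_sub 1) h1x
    convert this.hasDerivWithinAt using 1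
    · rfl
    · rfl
    · rfl
    · simp only [id]; rw [inv_pow]; ring
  have hinj : InjOn (fun x : ℝ => x / (1 - x)) (Ioo 0 1) := by
    intro a ha b hb hab
    have h1a : (1:ℝ) - a ≠ 0 := by have := ha.2; intro h; nlinarith
    have h1b : (1:ℝ) - b ≠ 0 := by have := hb.2; intro h; nlinarith
    field_simp at hab
    nlinarith [hab]
  have hsub := integral_image_eq_integral_abs_deriv_smul measurableSet_Ioo hderiv hinj
    (fun y => y ^ (s - 1) / (1 + y))
  rw [himg] at hsub
  rw [hsub]
  have hcongr : ∀ x ∈ Ioo (0:ℝ) 1, |(1 - x)⁻¹ ^ 2| • ((x / (1-x)) ^ (s - 1) / (1 + x / (1-x)))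
      = x ^ (s - 1) * (1 - x) ^ ((1 - s) - 1) := by
    intro x hx
    have hx0 : 0 < x := hx.1
    have h1x : 0 < 1 - x := by linarith [hx.2]
    have e1 : 1 + x / (1 - x) = (1 - x)⁻¹ := by field_simp; ring
    have e2 : (x / (1 - x)) ^ (s - 1) = x ^ (s - 1) * ((1 - x) ^ (s - 1))⁻¹ := by
      rw [Real.div_rpow hx0.le h1x.le, div_eq_mul_inv]
    have e3 : (1 - x) * (1 - x) ^ (s - 1) = (1 - x) ^ s := by
      nth_rewrite 1 [← Real.rpow_one (1 - x)]
      rw [← Real.rpow_add h1x]; ring_nf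
    have e4 : (1 - x) ^ ((1:ℝ) - s - 1) = ((1 - x) ^ s)⁻¹ := by
      rw [show (1 - s - 1 : ℝ) = -s by ring, Real.rpow_neg h1x.le]
    rw [e1, e2, smul_eq_mul, _root_.abs_of_nonneg (by positivity), e4, ← e3]
    have hne1 : (1 - x) ^ (s - 1) ≠ 0 := by positivity
    field_simp
  rw [setIntegral_congr_fun measurableSet_Ioo hcongr]
  have hbeta : Complex.betaIntegral s (1 - s) =
      ((∫ x in Ioo (0:ℝ) 1, x ^ (s - 1) * (1 - x) ^ ((1 - s) - 1) : ℝ) : ℂ) := by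
    rw [Complex.betaIntegral, intervalIntegral.integral_of_le zero_le_one]
    rw [show (∫ x in Ioo (0:ℝ) 1, x ^ (s - 1) * (1 - x) ^ ((1 - s) - 1) : ℝ)
        = ∫ x in Ioc (0:ℝ) 1, x ^ (s - 1) * (1 - x) ^ ((1 - s) - 1)
      from (integral_Ioc_eq_integral_Ioo).symm]
    have heq : ∀ x ∈ Ioc (0:ℝ) 1, (x:ℂ) ^ ((s:ℂ) - 1) * ((1:ℂ) - (x:ℂ)) ^ ((1:ℂ) - (s:ℂ) - 1)
        = ((x ^ (s - 1) * (1 - x) ^ ((1 - s) - 1) : ℝ) : ℂ) := by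
      intro x hx
      have hx0 : (0:ℝ) ≤ x := le_of_lt hx.1
      have h1x : (0:ℝ) ≤ 1 - x := by linarith [hx.2]
      rw [Complex.ofReal_mul, Complex.ofReal_cpow hx0, Complex.ofReal_cpow h1x]
      push_cast
      ring_nf
    rw [setIntegral_congr_fun measurableSet_Ioc heq]
    exact integral_ofReal
  have hGG : Complex.Gamma s * Complex.Gamma (1 - (s:ℂ)) = Complex.betaIntegral s (1 - s) := by
    have h := Complex.Gamma_mul_Gamma_eq_betaIntegral (s := (s:ℂ)) (t := (1:ℂ) - s)
      (by simpa using h0) (by simp; linarith)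
    rw [h]
    norm_num [Complex.Gamma_one]
  have hsin : Complex.Gamma s * Complex.Gamma (1 - (s:ℂ)) = (π:ℂ) / Complex.sin (π * s) :=
    Complex.Gamma_mul_Gamma_one_sub s
  have : ((∫ x in Ioo (0:ℝ) 1, x ^ (s - 1) * (1 - x) ^ ((1 - s) - 1) : ℝ) : ℂ)
      = ((π / Real.sin (π * s) : ℝ) : ℂ) := by
    rw [← hbeta, ← hGG, hsin]
    push_cast [Complex.ofReal_sin]
    norm_num
  exact_mod_cast this

lemma I1_eval {α : ℝ} (h0 : 0 < α) (h1 : α < 1) :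
    ∫ u in Ioi (0:ℝ), u ^ α / (1 + u ^ 2) = π / (2 * Real.cos (π * α / 2)) := by
  set s := (α + 1) / 2 with hs
  have hs0 : 0 < s := by rw [hs]; linarith
  have hs1 : s < 1 := by rw [hs]; linarith
  have hsub := integral_comp_rpow_Ioi (fun y => y ^ (s - 1) / (1 + y)) (p := 2) two_ne_zero
  have hcongr : ∀ x ∈ Ioi (0:ℝ),
      (|(2:ℝ)| * x ^ ((2:ℝ) - 1)) • ((x ^ (2:ℝ)) ^ (s - 1) / (1 + x ^ (2:ℝ)))
      = 2 * (x ^ α / (1 + x ^ 2)) := by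
    intro x hx
    have hx0 : (0:ℝ) < x := hx
    have e0 : x ^ (2:ℝ) = x ^ (2:ℕ) := by
      rw [← Real.rpow_natCast x 2]; norm_num
    have e1 : (x ^ (2:ℝ)) ^ (s - 1) = x ^ (2 * (s - 1)) := by
      rw [← Real.rpow_mul hx0.le]
    have e2 : x ^ ((2:ℝ) - 1) = x := by
      norm_num
    have e3 : x * x ^ (2 * (s - 1)) = x ^ α := by
      nth_rewrite 1 [← Real.rpow_one x]
      rw [← Real.rpow_add hx0]
      congr 1
      rw [hs]; ring
    rw [e1, e2, e0, smul_eq_mul, show |(2:ℝ)| = 2 by norm_num, ← e3]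
    ring
  rw [setIntegral_congr_fun measurableSet_Ioi hcongr] at hsub
  rw [J_eval hs0 hs1] at hsub
  rw [integral_const_mul] at hsub
  have hsin : Real.sin (π * s) = Real.cos (π * α / 2) := by
    rw [hs, show π * ((α + 1) / 2) = π * α / 2 + π / 2 by ring, Real.sin_add_pi_div_two]
  rw [hsin] at hsub
  have hc : 0 < Real.cos (π * α / 2) := by
    apply Real.cos_pos_of_mem_Ioo
    constructor
    · nlinarith [Real.pi_pos]
    · nlinarith [Real.pi_pos]
  rw [eq_div_iff (by positivity)]
  have h2 := (div_eq_iff hc.ne').1 hsub.symm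
  linear_combination -h2

lemma R_eval {α : ℝ} (h0 : 0 < α) (h1 : α < 1) {a : ℝ} (ha : 0 < a) :
    ∫ t in Ioi (0:ℝ), t ^ α / (t ^ 2 + a)
      = a ^ ((α - 1) / 2) * (π / (2 * Real.cos (π * α / 2))) := by
  have hsa : (0:ℝ) < Real.sqrt a := Real.sqrt_pos.2 ha
  have hsub := integral_comp_mul_left_Ioi
    (fun t : ℝ => t ^ α / (t ^ 2 + a)) 0 hsa
  rw [mul_zero] at hsub
  have hcongr : ∀ x ∈ Ioi (0:ℝ),
      (Real.sqrt a * x) ^ α / ((Real.sqrt a * x) ^ 2 + a)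
      = (a ^ (α / 2) / a) * (x ^ α / (1 + x ^ 2)) := by
    intro x hx
    have hx0 : (0:ℝ) < x := hx
    have e1 : (Real.sqrt a * x) ^ α = a ^ (α / 2) * x ^ α := by
      rw [Real.mul_rpow hsa.le hx0.le, Real.sqrt_eq_rpow, ← Real.rpow_mul ha.le,
        show 1 / 2 * α = α / 2 by ring]
    have e2 : (Real.sqrt a * x) ^ 2 + a = a * (x ^ 2 + 1) := by
      rw [mul_pow, Real.sq_sqrt ha.le]; ring
    rw [e1, e2, div_mul_div_comm, div_eq_div_iff (by positivity) (by positivity)]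
    ring
  rw [setIntegral_congr_fun measurableSet_Ioi hcongr, integral_const_mul,
    I1_eval h0 h1] at hsub
  rw [smul_eq_mul] at hsub
  rw [eq_comm, inv_mul_eq_iff_eq_mul₀ hsa.ne'] at hsub
  have e : Real.sqrt a * (a ^ (α / 2) / a) = a ^ ((α - 1) / 2) := by
    have d1 : a ^ (α / 2) / a = a ^ (α / 2 - 1) := by
      rw [Real.rpow_sub ha, Real.rpow_one]
    rw [d1, Real.sqrt_eq_rpow, ← Real.rpow_add ha,
      show 1 / 2 + (α / 2 - 1) = (α - 1) / 2 by ring]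
  rw [hsub, ← mul_assoc, e]

lemma slit_preconnected : IsPreconnected (slitPlane : Set ℂ) := by
  have h1 : Convex ℝ {z : ℂ | 0 < z.re} := convex_halfSpace_re_gt 0
  have h2 : Convex ℝ {z : ℂ | 0 < z.im} := convex_halfSpace_im_gt 0
  have h3 : Convex ℝ {z : ℂ | z.im < 0} := convex_halfSpace_im_lt 0
  have hA : IsPreconnected ({z : ℂ | 0 < z.re} ∪ {z : ℂ | 0 < z.im}) :=
    IsPreconnected.union' ⟨1 + I, by simp, by simp⟩ h1.isPreconnected h2.isPreconnected
  have hB : IsPreconnected ({z : ℂ | 0 < z.re} ∪ {z : ℂ | z.im < 0}) :=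
    IsPreconnected.union' ⟨1 - I, by simp, by simp⟩ h1.isPreconnected h3.isPreconnected
  have e : (slitPlane : Set ℂ) = ({z : ℂ | 0 < z.re} ∪ {z : ℂ | 0 < z.im})
      ∪ ({z : ℂ | 0 < z.re} ∪ {z : ℂ | z.im < 0}) := by
    ext z
    simp only [Complex.mem_slitPlane_iff, mem_union, mem_setOf_eq]
    constructor
    · rintro (h | h)
      · exact Or.inl (Or.inl h)
      · rcases lt_or_gt_of_ne h with h' | h'
        · exact Or.inr (Or.inr h')
        · exact Or.inl (Or.inr h')
    · rintro ((h | h) | (h | h))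
      · exact Or.inl h
      · exact Or.inr (ne_of_gt h)
      · exact Or.inl h
      · exact Or.inr (ne_of_lt h)
  rw [e]
  exact hA.union' ⟨1, by simp, by simp⟩ hB

lemma F_real {α : ℝ} (h0 : 0 < α) (h1 : α < 1) {a : ℝ} (ha : 0 < a) :
    ∫ t in Ioi (0:ℝ), ((t ^ α : ℝ) : ℂ) / ((t:ℂ)^2 + (a:ℂ))
      = ((a ^ ((α - 1)/2) * (π / (2 * Real.cos (π * α / 2))) : ℝ) : ℂ) := by
  have : (fun t : ℝ => ((t ^ α : ℝ) : ℂ) / ((t:ℂ)^2 + (a:ℂ)))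
      = fun t : ℝ => ((t ^ α / (t^2 + a) : ℝ) : ℂ) := by
    funext t; push_cast; ring
  rw [this, ← R_eval h0 h1 ha]
  exact integral_ofReal

lemma F_eq_G {α : ℝ} (h0 : 0 < α) (h1 : α < 1) :
    EqOn (fun w : ℂ => ∫ t in Ioi (0:ℝ), ((t ^ α : ℝ) : ℂ) / ((t : ℂ) ^ 2 + w))
      (fun w : ℂ => ((π / (2 * Real.cos (π * α / 2)) : ℝ) : ℂ) * w ^ (((α : ℂ) - 1) / 2))
      slitPlane := by
  have hF : AnalyticOnNhd ℂ
      (fun w : ℂ => ∫ t in Ioi (0:ℝ), ((t ^ α : ℝ) : ℂ) / ((t : ℂ) ^ 2 + w)) slitPlane := by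
    apply DifferentiableOn.analyticOnNhd ?_ isOpen_slitPlane
    exact fun w hw => ((cx_deriv h0 h1 hw).differentiableAt.differentiableWithinAt)
  have hG : AnalyticOnNhd ℂ
      (fun w : ℂ => ((π / (2 * Real.cos (π * α / 2)) : ℝ) : ℂ) * w ^ (((α : ℂ) - 1) / 2))
      slitPlane := by
    intro w hw
    exact analyticAt_const.mul ((analyticAt_id.cpow analyticAt_const hw))
  have key : ∀ a : ℝ, 0 < a →
      (∫ t in Ioi (0:ℝ), ((t ^ α : ℝ) : ℂ) / ((t : ℂ) ^ 2 + (a:ℂ)))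
        = ((π / (2 * Real.cos (π * α / 2)) : ℝ) : ℂ) * (a:ℂ) ^ (((α : ℂ) - 1) / 2) := by
    intro a ha
    rw [F_real h0 h1 ha]
    have e1 : ((α : ℂ) - 1) / 2 = (((α - 1) / 2 : ℝ) : ℂ) := by push_cast; ring
    rw [e1, ← Complex.ofReal_cpow ha.le]
    push_cast
    ring
  apply AnalyticOnNhd.eqOn_of_preconnected_of_frequently_eq hF hG slit_preconnected
    (one_mem_slitPlane)
  have tendR : Filter.Tendsto (fun n : ℕ => (1 + (n+1:ℝ)⁻¹ : ℝ)) Filter.atTop (𝓝 1) := by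
    have h := tendsto_one_div_add_atTop_nhds_zero_nat (𝕜 := ℝ)
    simp only [one_div] at h
    simpa using (h.const_add 1)
  have tend : Filter.Tendsto (fun n : ℕ => ((1 + (n+1:ℝ)⁻¹ : ℝ) : ℂ)) Filter.atTop
      (𝓝[≠] (1:ℂ)) := by
    apply tendsto_nhdsWithin_of_tendsto_nhds_of_eventually_within
    · have := (Complex.continuous_ofReal.tendsto 1).comp tendR
      simpa [Function.comp_def] using this
    · apply Filter.Eventually.of_forall
      intro n
      simp only [mem_compl_iff, mem_singleton_iff]
      intro h
      have : (1 + (n+1:ℝ)⁻¹ : ℝ) = 1 := by exact_mod_cast h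
      have hp : (0:ℝ) < (n+1:ℝ)⁻¹ := by positivity
      linarith
  apply tend.frequently
  apply Filter.Eventually.frequently
  apply Filter.Eventually.of_forall
  intro n
  exact key _ (by positivity)

lemma neg_sq_mem (z : ℂ) (him : z.im ≠ 0) : -(z^2) ∈ slitPlane := by
  rw [Complex.mem_slitPlane_iff]
  rcases eq_or_ne z.re 0 with h | h
  · left
    simp only [pow_two, Complex.neg_re, Complex.mul_re, h, mul_zero, zero_sub, neg_neg,
      zero_mul]
    exact mul_self_pos.mpr him
  · right
    simp only [pow_two, Complex.neg_im, Complex.mul_im, h]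
    intro hc
    rw [neg_eq_zero] at hc
    have : z.re * z.im = 0 := by linarith [hc]
    rcases mul_eq_zero.1 this with h' | h' <;> [exact h h'; exact him h']

lemma cpow_neg_sq_pos {α : ℝ} (z : ℂ) (hz : 0 < z.arg) (hz2 : z.arg < π) :
    (-(z^2)) ^ (((α:ℂ) - 1)/2)
      = z ^ ((α : ℂ) - 1) * Complex.exp ((((1 - α) * π / 2 : ℝ) : ℂ) * I) := by
  have hz0 : z ≠ 0 := by
    intro h; rw [h, Complex.arg_zero] at hz; exact lt_irrefl 0 hz
  have h1 : -(z^2) = Complex.exp (2 * Complex.log z - ↑π * I) := by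
    rw [Complex.exp_sub, Complex.exp_pi_mul_I, two_mul, Complex.exp_add, Complex.exp_log hz0]
    field_simp
  have h2 : Complex.log (-(z^2)) = 2 * Complex.log z - ↑π * I := by
    rw [h1, Complex.log_exp]
    · simp only [Complex.sub_im, Complex.mul_im, Complex.mul_re, Complex.ofReal_re,
        Complex.ofReal_im, Complex.I_re, Complex.I_im, Complex.log_im]
      norm_num
      linarith
    · simp only [Complex.sub_im, Complex.mul_im, Complex.mul_re, Complex.ofReal_re,
        Complex.ofReal_im, Complex.I_re, Complex.I_im, Complex.log_im]
      norm_num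
      linarith [Complex.arg_le_pi z]
  have hne : -(z^2) ≠ 0 := by
    simpa using pow_ne_zero 2 hz0
  rw [Complex.cpow_def_of_ne_zero hne, Complex.cpow_def_of_ne_zero hz0, h2, ← Complex.exp_add]
  congr 1
  push_cast
  ring

lemma cpow_neg_sq_neg {α : ℝ} (z : ℂ) (hz : -π < z.arg) (hz2 : z.arg < 0) :
    (-(z^2)) ^ (((α:ℂ) - 1)/2)
      = z ^ ((α : ℂ) - 1) * Complex.exp (-((((1 - α) * π / 2 : ℝ) : ℂ) * I)) := by
  have hz0 : z ≠ 0 := by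
    intro h; rw [h, Complex.arg_zero] at hz2; exact lt_irrefl 0 hz2
  have h1 : -(z^2) = Complex.exp (2 * Complex.log z + ↑π * I) := by
    rw [Complex.exp_add, Complex.exp_pi_mul_I, two_mul, Complex.exp_add, Complex.exp_log hz0]
    ring
  have h2 : Complex.log (-(z^2)) = 2 * Complex.log z + ↑π * I := by
    rw [h1, Complex.log_exp]
    · simp only [Complex.add_im, Complex.mul_im, Complex.mul_re, Complex.ofReal_re,
        Complex.ofReal_im, Complex.I_re, Complex.I_im, Complex.log_im]
      norm_num
      linarith
    · simp only [Complex.add_im, Complex.mul_im, Complex.mul_re, Complex.ofReal_re,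
        Complex.ofReal_im, Complex.I_re, Complex.I_im, Complex.log_im]
      norm_num
      linarith
  have hne : -(z^2) ≠ 0 := by
    simpa using pow_ne_zero 2 hz0
  rw [Complex.cpow_def_of_ne_zero hne, Complex.cpow_def_of_ne_zero hz0, h2, ← Complex.exp_add]
  congr 1
  push_cast
  ring

/-- **A contour integral identity**: for `α ∈ (0,1)` and nonreal `z`,
`∫₀^∞ t^α/(t² - z²) dt = z^{α-1} (π / (2 cos(πα/2))) e^{±(1-α)πi/2}`,
with the sign `+` when `0 < arg z < π` and `-` when `-π < arg z < 0`
(principal branch powers). -/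
theorem integral_rpow_div_sq_sub_sq (α : ℝ) (hα : α ∈ Set.Ioo (0 : ℝ) 1) (z : ℂ) :
    ((0 < z.arg ∧ z.arg < π) →
      IntegrableOn (fun t : ℝ => ((t ^ α : ℝ) : ℂ) / ((t : ℂ) ^ 2 - z ^ 2))
        (Set.Ioi 0) ∧
      ∫ t in Set.Ioi (0 : ℝ), ((t ^ α : ℝ) : ℂ) / ((t : ℂ) ^ 2 - z ^ 2) =
        z ^ ((α : ℂ) - 1) * ((π / (2 * Real.cos (π * α / 2)) : ℝ) : ℂ) *
          Complex.exp ((((1 - α) * π / 2 : ℝ) : ℂ) * Complex.I)) ∧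
    ((-π < z.arg ∧ z.arg < 0) →
      IntegrableOn (fun t : ℝ => ((t ^ α : ℝ) : ℂ) / ((t : ℂ) ^ 2 - z ^ 2))
        (Set.Ioi 0) ∧
      ∫ t in Set.Ioi (0 : ℝ), ((t ^ α : ℝ) : ℂ) / ((t : ℂ) ^ 2 - z ^ 2) =
        z ^ ((α : ℂ) - 1) * ((π / (2 * Real.cos (π * α / 2)) : ℝ) : ℂ) *
          Complex.exp (-((((1 - α) * π / 2 : ℝ) : ℂ) * Complex.I))) := by
  obtain ⟨h0, h1⟩ := hα
  have heqfun : (fun t : ℝ => ((t ^ α : ℝ) : ℂ) / ((t : ℂ) ^ 2 - z ^ 2))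
      = fun t : ℝ => ((t ^ α : ℝ) : ℂ) / ((t : ℂ) ^ 2 + -(z ^ 2)) := by
    funext t; rw [sub_eq_add_neg]
  constructor
  · rintro ⟨ha1, ha2⟩
    have hz0 : z ≠ 0 := by
      intro h; rw [h, Complex.arg_zero] at ha1; exact lt_irrefl 0 ha1
    have him : 0 < z.im := by
      have hs : 0 < Real.sin z.arg := Real.sin_pos_of_pos_of_lt_pi ha1 ha2
      have hp : 0 < ‖z‖ * Real.sin z.arg :=
        mul_pos (norm_pos_iff.mpr hz0) hs
      rwa [Complex.norm_mul_sin_arg] at hp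
    have hmem : -(z ^ 2) ∈ slitPlane := neg_sq_mem z (ne_of_gt him)
    rw [heqfun]
    refine ⟨cx_integrable h0 h1 hmem, ?_⟩
    calc (∫ t in Ioi (0:ℝ), ((t ^ α : ℝ) : ℂ) / ((t : ℂ) ^ 2 + -(z ^ 2)))
        = ((π / (2 * Real.cos (π * α / 2)) : ℝ) : ℂ) * (-(z ^ 2)) ^ (((α : ℂ) - 1) / 2) :=
          F_eq_G h0 h1 hmem
      _ = z ^ ((α : ℂ) - 1) * ((π / (2 * Real.cos (π * α / 2)) : ℝ) : ℂ) *
          Complex.exp ((((1 - α) * π / 2 : ℝ) : ℂ) * Complex.I) := by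
          rw [cpow_neg_sq_pos z ha1 ha2]; ring
  · rintro ⟨ha1, ha2⟩
    have hz0 : z ≠ 0 := by
      intro h; rw [h, Complex.arg_zero] at ha2; exact lt_irrefl 0 ha2
    have him : z.im < 0 := by
      have hs : Real.sin z.arg < 0 := Real.sin_neg_of_neg_of_neg_pi_lt ha2 ha1
      have hp : ‖z‖ * Real.sin z.arg < 0 :=
        mul_neg_of_pos_of_neg (norm_pos_iff.mpr hz0) hs
      rwa [Complex.norm_mul_sin_arg] at hp
    have hmem : -(z ^ 2) ∈ slitPlane := neg_sq_mem z (ne_of_lt him)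
    rw [heqfun]
    refine ⟨cx_integrable h0 h1 hmem, ?_⟩
    calc (∫ t in Ioi (0:ℝ), ((t ^ α : ℝ) : ℂ) / ((t : ℂ) ^ 2 + -(z ^ 2)))
        = ((π / (2 * Real.cos (π * α / 2)) : ℝ) : ℂ) * (-(z ^ 2)) ^ (((α : ℂ) - 1) / 2) :=
          F_eq_G h0 h1 hmem
      _ = z ^ ((α : ℂ) - 1) * ((π / (2 * Real.cos (π * α / 2)) : ℝ) : ℂ) *
          Complex.exp (-((((1 - α) * π / 2 : ℝ) : ℂ) * Complex.I)) := by
          rw [cpow_neg_sq_neg z ha1 ha2]; ring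
end

section
/- Let α∈(0,1), λ>0, β∈ℝ and c_α=(1−α/2)(1−α). Define Λ on ℂ∖ℝ by Λ(z) = (Γ(α)λ/c_α)(z²−β²) + z^{α−1}·(π/cos(πα/2))·e^{(1−α)πi/2} for Im(z)>0, and Λ(z) = (Γ(α)λ/c_α)(z²−β²) + z^{α−1}·(π/cos(πα/2))·e^{−(1−α)πi/2} for Im(z)<0 (principal branch powers). Then Λ has exactly two zeros in ℂ∖ℝ, namely z=iν and z=−iν, where ν is the unique positive real solution of λ = (c_α/Γ(α))·(π/cos(πα/2))·ν^{α−1}/(β²+ν²). -/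
open Complex
open scoped Real


-- existence and uniqueness of the zero of h t = A*(t^2+β^2) - B*t^(α-1)
lemma fou_aux_nu (α A B β : ℝ) (hα0 : 0 < α) (hα1 : α < 1)
    (hA : 0 < A) (hB : 0 < B) :
    ∃ ν : ℝ, 0 < ν ∧ A * (ν ^ 2 + β ^ 2) = B * ν ^ (α - 1) ∧
      ∀ t : ℝ, 0 < t → A * (t ^ 2 + β ^ 2) = B * t ^ (α - 1) → t = ν := by
  set h : ℝ → ℝ := fun t => A * (t ^ 2 + β ^ 2) - B * t ^ (α - 1) with hh
  have hmono : StrictMonoOn h (Set.Ioi (0 : ℝ)) := by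
    intro x hx y hy hxy
    have h1 : x ^ 2 < y ^ 2 := by nlinarith [Set.mem_Ioi.mp hx]
    have h2 : y ^ (α - 1) < x ^ (α - 1) :=
      Real.rpow_lt_rpow_of_neg hx hxy (by linarith)
    simp only [hh]
    nlinarith
  -- small point
  set C : ℝ := A * (1 + β ^ 2) with hC
  have hCpos : 0 < C := by positivity
  set a0 : ℝ := (C / B) ^ (α - 1)⁻¹ with ha0
  have ha0pos : 0 < a0 := Real.rpow_pos_of_pos (by positivity) _
  set a : ℝ := min 1 a0 / 2 with ha
  have hapos : 0 < a := by positivity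
  have ha1 : a ≤ 1 / 2 := by
    have := min_le_left 1 a0
    simp only [ha]; linarith
  have haa0 : a < a0 := by
    have := min_le_right 1 a0
    simp only [ha]; linarith
  have hha : h a < 0 := by
    have h1 : a0 ^ (α - 1) = C / B := Real.rpow_inv_rpow (by positivity) (by linarith)
    have h2 : a0 ^ (α - 1) < a ^ (α - 1) :=
      Real.rpow_lt_rpow_of_neg hapos haa0 (by linarith)
    have h3 : C < B * a ^ (α - 1) := by
      rw [h1] at h2
      calc C = B * (C / B) := by field_simp
      _ < B * a ^ (α - 1) := by exact mul_lt_mul_of_pos_left h2 hB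
    have ha2 : a ^ 2 ≤ 1 := by nlinarith
    have h4 : A * (a ^ 2 + β ^ 2) ≤ C := by
      simp only [hC]
      nlinarith
    simp only [hh]; linarith
  -- big point
  set b : ℝ := max 1 (Real.sqrt (B / A)) + 1 with hb
  have hb1 : 1 ≤ b := by
    have := le_max_left 1 (Real.sqrt (B / A)); simp only [hb]; linarith
  have hbs : Real.sqrt (B / A) < b := by
    have := le_max_right 1 (Real.sqrt (B / A)); simp only [hb]; linarith
  have hhb : 0 < h b := by
    have h1 : b ^ (α - 1) ≤ 1 := Real.rpow_le_one_of_one_le_of_nonpos hb1 (by linarith)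
    have h2 : B / A < b ^ 2 := by
      nlinarith [Real.sq_sqrt (le_of_lt (div_pos hB hA)), Real.sqrt_nonneg (B / A)]
    have h3 : B < A * b ^ 2 := by
      rw [div_lt_iff₀ hA] at h2; linarith
    simp only [hh]
    nlinarith
  have hab : a ≤ b := by linarith
  have hcont : ContinuousOn h (Set.Icc a b) := by
    apply ContinuousOn.sub
    · fun_prop
    · apply ContinuousOn.mul continuousOn_const
      apply ContinuousOn.rpow_const continuousOn_id
      intro x hx
      exact Or.inl (ne_of_gt (lt_of_lt_of_le hapos hx.1))
  have hmem : (0 : ℝ) ∈ Set.Icc (h a) (h b) := ⟨le_of_lt hha, le_of_lt hhb⟩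
  obtain ⟨ν, hν, hν0⟩ := intermediate_value_Icc hab hcont hmem
  have hνpos : 0 < ν := lt_of_lt_of_le hapos hν.1
  refine ⟨ν, hνpos, by simp only [hh] at hν0; linarith, ?_⟩
  intro t ht hteq
  have ht0 : h t = 0 := by simp only [hh]; linarith
  exact hmono.injOn (Set.mem_Ioi.mpr ht) (Set.mem_Ioi.mpr hνpos) (by rw [ht0, hν0])

lemma fou_polar (α : ℝ) (z : ℂ) (hz : z ≠ 0) :
    z ^ ((α : ℂ) - 1) = ((‖z‖ ^ (α - 1) : ℝ) : ℂ) *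
      Complex.exp ((((α - 1) * Complex.arg z : ℝ) : ℂ) * Complex.I) := by
  rw [Complex.cpow_def_of_ne_zero hz]
  have hcast : ((α : ℂ) - 1) = ((α - 1 : ℝ) : ℂ) := by push_cast; ring
  have hlog : ((α : ℂ) - 1) * Complex.log z =
      (((α - 1) * Real.log (‖z‖) : ℝ) : ℂ) +
        (((α - 1) * Complex.arg z : ℝ) : ℂ) * Complex.I := by
    rw [hcast]
    apply Complex.ext
    · simp [Complex.mul_re, Complex.add_re, Complex.log_re, Complex.log_im]
    · simp [Complex.mul_im, Complex.add_im, Complex.log_re, Complex.log_im]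
  rw [mul_comm (Complex.log z), hlog, Complex.exp_add]
  congr 1
  rw [Real.rpow_def_of_pos (norm_pos_iff.mpr hz), ← Complex.ofReal_exp]
  ring_nf

lemma fou_axis (α A B β t : ℝ) (ht : 0 < t) :
    ((A : ℝ) : ℂ) * (((t : ℂ) * Complex.I) ^ 2 - (β : ℂ) ^ 2) +
      ((t : ℂ) * Complex.I) ^ ((α : ℂ) - 1) * ((B : ℝ) : ℂ) *
        Complex.exp ((((1 - α) * π / 2 : ℝ) : ℂ) * Complex.I) =
      (((-(A * (t ^ 2 + β ^ 2)) + B * t ^ (α - 1)) : ℝ) : ℂ) := by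
  have hz : (t : ℂ) * Complex.I ≠ 0 := by
    simp [Complex.ext_iff, ne_of_gt ht]
  have harg : Complex.arg ((t : ℂ) * Complex.I) = π / 2 :=
    Complex.arg_eq_pi_div_two_iff.mpr (by simp [ht])
  have habs : ‖(t : ℂ) * Complex.I‖ = t := by
    simp [abs_of_pos ht]
  rw [fou_polar α _ hz, habs, harg]
  have hexp : Complex.exp ((((α - 1) * (π / 2) : ℝ) : ℂ) * Complex.I) *
      Complex.exp ((((1 - α) * π / 2 : ℝ) : ℂ) * Complex.I) = 1 := by
    rw [← Complex.exp_add, ← add_mul, ← Complex.ofReal_add]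
    have : ((α - 1) * (π / 2) + (1 - α) * π / 2 : ℝ) = 0 := by ring
    rw [this]
    simp
  have hre : ((t ^ (α - 1) : ℝ) : ℂ) *
        Complex.exp ((((α - 1) * (π / 2) : ℝ) : ℂ) * Complex.I) * ((B : ℝ) : ℂ) *
        Complex.exp ((((1 - α) * π / 2 : ℝ) : ℂ) * Complex.I) =
      ((B * t ^ (α - 1) : ℝ) : ℂ) *
        (Complex.exp ((((α - 1) * (π / 2) : ℝ) : ℂ) * Complex.I) *
          Complex.exp ((((1 - α) * π / 2 : ℝ) : ℂ) * Complex.I)) := by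
    push_cast; ring
  rw [hre, hexp, mul_one, mul_pow, Complex.I_sq]
  push_cast; ring

lemma fou_im (α B : ℝ) (z : ℂ) (hz : z ≠ 0) :
    (z ^ ((α : ℂ) - 1) * ((B : ℝ) : ℂ) *
        Complex.exp ((((1 - α) * π / 2 : ℝ) : ℂ) * Complex.I)).im =
      B * ‖z‖ ^ (α - 1) *
        Real.sin ((α - 1) * Complex.arg z + (1 - α) * π / 2) := by
  rw [fou_polar α z hz]
  have h1 : ((‖z‖ ^ (α - 1) : ℝ) : ℂ) *
        Complex.exp ((((α - 1) * Complex.arg z : ℝ) : ℂ) * Complex.I) * ((B : ℝ) : ℂ) *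
        Complex.exp ((((1 - α) * π / 2 : ℝ) : ℂ) * Complex.I) =
      ((B * ‖z‖ ^ (α - 1) : ℝ) : ℂ) *
        Complex.exp ((((α - 1) * Complex.arg z + (1 - α) * π / 2 : ℝ) : ℂ) * Complex.I) := by
    rw [Complex.ofReal_add, add_mul, Complex.exp_add]; push_cast; ring
  rw [h1]
  simp only [Complex.mul_im, Complex.ofReal_re, Complex.ofReal_im,
    Complex.exp_ofReal_mul_I_im, Complex.exp_ofReal_mul_I_re, zero_mul, add_zero]

set_option maxHeartbeats 1000000 in
/-- **Zeros of the structural function of the fractional Ornstein--Uhlenbeck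
eigenproblem.** For `α ∈ (0,1)`, `λ > 0`, `β ∈ ℝ`, the function
`Λ(z) = (Γ(α)λ/c_α)(z² - β²) + z^{α-1} (π/cos(πα/2)) e^{±(1-α)πi/2}`
(sign according to the half plane) has exactly two zeros off the real line,
namely `±iν`, where `ν` is the unique positive solution of
`λ = (c_α/Γ(α)) (π/cos(πα/2)) ν^{α-1}/(β² + ν²)`. -/
theorem fou_structural_function_zeros
    (α lam β : ℝ) (hα : α ∈ Set.Ioo (0 : ℝ) 1) (hlam : 0 < lam)
    (cα : ℝ) (hcα : cα = (1 - α / 2) * (1 - α))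
    (Λ : ℂ → ℂ)
    (hup : ∀ z : ℂ, 0 < z.im → Λ z =
      ((Real.Gamma α * lam / cα : ℝ) : ℂ) * (z ^ 2 - (β : ℂ) ^ 2) +
        z ^ ((α : ℂ) - 1) * ((π / Real.cos (π * α / 2) : ℝ) : ℂ) *
          Complex.exp ((((1 - α) * π / 2 : ℝ) : ℂ) * Complex.I))
    (hdown : ∀ z : ℂ, z.im < 0 → Λ z =
      ((Real.Gamma α * lam / cα : ℝ) : ℂ) * (z ^ 2 - (β : ℂ) ^ 2) +
        z ^ ((α : ℂ) - 1) * ((π / Real.cos (π * α / 2) : ℝ) : ℂ) *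
          Complex.exp (-((((1 - α) * π / 2 : ℝ) : ℂ) * Complex.I))) :
    ∃ ν : ℝ, 0 < ν ∧
      lam = (cα / Real.Gamma α) * (π / Real.cos (π * α / 2)) *
        ν ^ (α - 1) / (β ^ 2 + ν ^ 2) ∧
      (∀ ν' : ℝ, 0 < ν' →
        lam = (cα / Real.Gamma α) * (π / Real.cos (π * α / 2)) *
          ν' ^ (α - 1) / (β ^ 2 + ν' ^ 2) → ν' = ν) ∧
      {z : ℂ | z.im ≠ 0 ∧ Λ z = 0} =
        {(ν : ℂ) * Complex.I, -((ν : ℂ) * Complex.I)} := by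
  obtain ⟨hα0, hα1⟩ := hα
  have hΓ : 0 < Real.Gamma α := Real.Gamma_pos_of_pos hα0
  have hcαpos : 0 < cα := by rw [hcα]; nlinarith
  have hπ := Real.pi_pos
  have hcos : 0 < Real.cos (π * α / 2) :=
    Real.cos_pos_of_mem_Ioo ⟨by nlinarith, by nlinarith⟩
  set A := Real.Gamma α * lam / cα with hA
  set B := π / Real.cos (π * α / 2) with hB
  have hApos : 0 < A := div_pos (mul_pos hΓ hlam) hcαpos
  have hBpos : 0 < B := div_pos hπ hcos
  obtain ⟨ν, hνpos, hνeq, hνuniq⟩ := fou_aux_nu α A B β hα0 hα1 hApos hBpos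
  have htrans : ∀ t : ℝ, 0 < t →
      ((lam = cα / Real.Gamma α * (π / Real.cos (π * α / 2)) * t ^ (α - 1) / (β ^ 2 + t ^ 2)) ↔
        A * (t ^ 2 + β ^ 2) = B * t ^ (α - 1)) := by
    intro t ht
    have hd : (0 : ℝ) < β ^ 2 + t ^ 2 := by positivity
    rw [hA, hB, eq_div_iff (ne_of_gt hd)]
    constructor
    · intro h
      field_simp at h ⊢
      linear_combination h
    · intro h
      field_simp at h ⊢
      linear_combination h
  -- Λ on the positive imaginary axis
  have haxisΛ : ∀ t : ℝ, 0 < t →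
      (Λ ((t : ℂ) * Complex.I) = 0 ↔ A * (t ^ 2 + β ^ 2) = B * t ^ (α - 1)) := by
    intro t ht
    have him : ((t : ℂ) * Complex.I).im = t := by simp
    rw [hup _ (by rw [him]; exact ht), fou_axis α A B β t ht, Complex.ofReal_eq_zero]
    constructor <;> intro h <;> linarith
  -- conjugation symmetry
  have hconj : ∀ z : ℂ, z.im < 0 → Λ z = (starRingEnd ℂ) (Λ ((starRingEnd ℂ) z)) := by
    intro z hzim
    have hw : ((starRingEnd ℂ) z).im = -z.im := Complex.conj_im z
    have hargz : z.arg ≠ π := by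
      intro h
      have := Complex.arg_eq_pi_iff.mp h
      linarith [this.2]
    have hc : (starRingEnd ℂ) ((starRingEnd ℂ) z ^ ((α : ℂ) - 1)) = z ^ ((α : ℂ) - 1) := by
      have h1 := Complex.cpow_conj z ((α : ℂ) - 1) hargz
      have h2 : (starRingEnd ℂ) ((α : ℂ) - 1) = (α : ℂ) - 1 := by
        simp [map_sub, Complex.conj_ofReal]
      rw [h2] at h1
      exact h1.symm
    rw [hdown z hzim, hup _ (by rw [hw]; linarith)]
    simp only [map_add, map_mul, map_sub, map_pow, Complex.conj_conj, Complex.conj_ofReal,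
      hc, ← Complex.exp_conj, map_mul, Complex.conj_I]
    ring_nf
  -- zeros in the upper half plane
  have hupperzero : ∀ z : ℂ, 0 < z.im → Λ z = 0 → z = (ν : ℂ) * Complex.I := by
    intro z hzim hz0
    have hz : z ≠ 0 := by
      intro h; rw [h] at hzim; simp at hzim
    have hre : z.re = 0 := by
      by_contra hre
      have him0 : (Λ z).im = 0 := by rw [hz0]; rfl
      rw [hup z hzim] at him0
      have e1 : (((A : ℝ) : ℂ) * (z ^ 2 - (β : ℂ) ^ 2)).im = A * (2 * z.re * z.im) := by
        rw [Complex.mul_im, Complex.ofReal_re, Complex.ofReal_im, zero_mul, add_zero,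
          Complex.sub_im, ← Complex.ofReal_pow, Complex.ofReal_im, sub_zero, pow_two,
          Complex.mul_im]
        ring
      rw [Complex.add_im, e1, fou_im α B z hz] at him0
      have harg0 : 0 < z.arg := by
        rcases (Complex.arg_nonneg_iff.mpr hzim.le).lt_or_eq with h | h
        · exact h
        · exfalso
          have := Complex.arg_eq_zero_iff.mp h.symm
          linarith [this.2]
      have hargπ : z.arg < π :=
        lt_of_le_of_ne (Complex.arg_le_pi z) (fun h => by
          have := Complex.arg_eq_pi_iff.mp h; linarith [this.2])
      have hrpos : 0 < ‖z‖ ^ (α - 1) :=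
        Real.rpow_pos_of_pos (norm_pos_iff.mpr hz) _
      rcases lt_trichotomy z.re 0 with h | h | h
      · have hφ : π / 2 < z.arg := by
          by_contra hle
          push_neg at hle
          rcases Complex.arg_le_pi_div_two_iff.mp hle with h' | h'
          · linarith
          · linarith
        have hu : 0 < z.arg - π / 2 := by linarith
        have hp : 0 < (1 - α) * (z.arg - π / 2) :=
          mul_pos (by linarith) hu
        have hψ0 : (α - 1) * z.arg + (1 - α) * π / 2 < 0 := by nlinarith
        have hq : (1 - α) * (z.arg - π / 2) < 1 * (z.arg - π / 2) :=
          mul_lt_mul_of_pos_right (by linarith) hu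
        have hψπ : -π < (α - 1) * z.arg + (1 - α) * π / 2 := by nlinarith
        have hsin := Real.sin_neg_of_neg_of_neg_pi_lt hψ0 hψπ
        have t1 : A * (2 * z.re * z.im) < 0 :=
          mul_neg_of_pos_of_neg hApos
            (by nlinarith [mul_neg_of_neg_of_pos h hzim])
        have t2 : B * ‖z‖ ^ (α - 1) *
            Real.sin ((α - 1) * z.arg + (1 - α) * π / 2) < 0 :=
          mul_neg_of_pos_of_neg (mul_pos hBpos hrpos) hsin
        linarith
      · exact hre h
      · have hφ : z.arg < π / 2 := by
          have := Complex.abs_arg_lt_pi_div_two_iff.mpr (Or.inl h)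
          exact lt_of_le_of_lt (le_abs_self _) this
        have hu : 0 < π / 2 - z.arg := by linarith
        have hp : 0 < (1 - α) * (π / 2 - z.arg) :=
          mul_pos (by linarith) hu
        have hψ0 : 0 < (α - 1) * z.arg + (1 - α) * π / 2 := by nlinarith
        have hq : (1 - α) * (π / 2 - z.arg) < 1 * (π / 2 - z.arg) :=
          mul_lt_mul_of_pos_right (by linarith) hu
        have hψπ : (α - 1) * z.arg + (1 - α) * π / 2 < π := by nlinarith
        have hsin := Real.sin_pos_of_pos_of_lt_pi hψ0 hψπ
        have t1 : 0 < A * (2 * z.re * z.im) :=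
          mul_pos hApos (by nlinarith [mul_pos h hzim])
        have t2 : 0 < B * ‖z‖ ^ (α - 1) *
            Real.sin ((α - 1) * z.arg + (1 - α) * π / 2) :=
          mul_pos (mul_pos hBpos hrpos) hsin
        linarith
    have hz' : z = ((z.im : ℝ) : ℂ) * Complex.I := by
      apply Complex.ext <;> simp [hre]
    have h0 : Λ (((z.im : ℝ) : ℂ) * Complex.I) = 0 := by rw [← hz']; exact hz0
    have heq2 := (haxisΛ z.im hzim).mp h0
    have hνi := hνuniq z.im hzim heq2
    rw [hz', hνi]
  refine ⟨ν, hνpos, (htrans ν hνpos).mpr hνeq,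
    fun t ht h => hνuniq t ht ((htrans t ht).mp h), ?_⟩
  ext z
  simp only [Set.mem_setOf_eq, Set.mem_insert_iff, Set.mem_singleton_iff]
  constructor
  · rintro ⟨hne, h0⟩
    rcases lt_trichotomy z.im 0 with h | h | h
    · right
      have hcz := hconj z h
      have h2 : (starRingEnd ℂ) (Λ ((starRingEnd ℂ) z)) = 0 := by rw [← hcz, h0]
      have h3 : Λ ((starRingEnd ℂ) z) = 0 := by
        have := congrArg (starRingEnd ℂ) h2
        simpa using this
      have hwim : 0 < ((starRingEnd ℂ) z).im := by
        rw [Complex.conj_im]; linarith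
      have hw := hupperzero _ hwim h3
      have := congrArg (starRingEnd ℂ) hw
      simp only [Complex.conj_conj, map_mul, Complex.conj_ofReal, Complex.conj_I] at this
      rw [this]; ring
    · exact absurd h hne
    · left; exact hupperzero z h h0
  · rintro (rfl | rfl)
    · refine ⟨by simp [ne_of_gt hνpos], (haxisΛ ν hνpos).mpr hνeq⟩
    · have him : (-((ν : ℂ) * Complex.I)).im = -ν := by simp
      refine ⟨by rw [him]; simpa using ne_of_gt hνpos, ?_⟩
      have hcz := hconj _ (by rw [him]; linarith)
      rw [hcz]
      have hcc : (starRingEnd ℂ) (-((ν : ℂ) * Complex.I)) = (ν : ℂ) * Complex.I := by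
        simp [map_neg, map_mul, Complex.conj_ofReal, Complex.conj_I]
      rw [hcc, (haxisΛ ν hνpos).mpr hνeq, map_zero]
end

section
/- Let α∈(0,1), λ>0 and c_α=(1−α/2)(1−α)>0. Define Λ on ℂ∖ℝ by Λ(z) = (λΓ(α)/c_α)z² − (π/cos(πα/2))·z^{α−3}·e^{(1−α)πi/2} for Im(z)>0, and with e^{−(1−α)πi/2} for Im(z)<0 (principal branch powers). Then Λ has exactly six zeros in ℂ∖ℝ, namely ±iν, ±ν·e^{i(π/2)(1−α)/(5−α)}, and ±ν·e^{i(π/2)(9−α)/(5−α)}, where ν>0 is determined by ν^{α−5} = (λΓ(α)/c_α)·cos(πα/2)/π. -/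
open Complex
open scoped Real

private lemma cpow_polar (z : ℂ) (hz0 : z ≠ 0) (t : ℝ) :
    z ^ ((t : ℂ)) = ((‖z‖ ^ t : ℝ) : ℂ) *
      Complex.exp (((t * Complex.arg z : ℝ) : ℂ) * Complex.I) := by
  rw [Complex.cpow_def_of_ne_zero hz0]
  rw [show Complex.log z * (t : ℂ)
      = ((t * Real.log (‖z‖) : ℝ) : ℂ)
        + ((t * Complex.arg z : ℝ) : ℂ) * Complex.I by
    rw [Complex.log]; push_cast; ring]
  rw [Complex.exp_add]
  congr 1
  rw [← Complex.ofReal_exp]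
  congr 1
  rw [Real.rpow_def_of_pos (norm_pos_iff.mpr hz0), mul_comm]

private lemma abs_polar (r φ : ℝ) (hr : 0 ≤ r) :
    ‖((r : ℂ) * Complex.exp ((φ : ℂ) * Complex.I))‖ = r := by
  rw [norm_mul, Complex.norm_exp]
  simp [Complex.norm_of_nonneg hr, hr]

private lemma arg_polar (r φ : ℝ) (hr : 0 < r) (hφ : φ ∈ Set.Ioc (-π) π) :
    Complex.arg ((r : ℂ) * Complex.exp ((φ : ℂ) * Complex.I)) = φ := by
  rw [Complex.exp_mul_I]
  exact Complex.arg_mul_cos_add_sin_mul_I hr hφ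

private lemma polar_ne_zero (r φ : ℝ) (hr : 0 < r) :
    ((r : ℂ) * Complex.exp ((φ : ℂ) * Complex.I)) ≠ 0 :=
  mul_ne_zero (by exact_mod_cast hr.ne') (Complex.exp_ne_zero _)

private lemma im_polar (r φ : ℝ) :
    ((r : ℂ) * Complex.exp ((φ : ℂ) * Complex.I)).im = r * Real.sin φ := by
  rw [Complex.exp_mul_I]
  simp [← Complex.ofReal_cos, ← Complex.ofReal_sin]

private lemma upper_char (A B θ c ν : ℝ) (hA : 0 < A) (hB : 0 < B) (hν : 0 < ν)
    (hθ0 : 0 < θ) (hθ2 : θ < π / 2) (hc4 : 4 < c) (hc5 : c < 5)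
    (hθ4 : θ + 4 * π < c * π)
    (hνc : ν ^ c = B / A) (z : ℂ) (hz : 0 < z.im) :
    (A : ℂ) * z ^ 2 - (B : ℂ) * z ^ (((2 - c : ℝ) : ℂ)) * Complex.exp ((θ : ℂ) * Complex.I) = 0 ↔
      (z = (ν : ℂ) * Complex.exp (((θ / c : ℝ) : ℂ) * Complex.I) ∨
       z = (ν : ℂ) * Complex.exp ((((θ + 2 * π) / c : ℝ) : ℂ) * Complex.I) ∨
       z = (ν : ℂ) * Complex.exp ((((θ + 4 * π) / c : ℝ) : ℂ) * Complex.I)) := by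
  have hπ : (0:ℝ) < π := Real.pi_pos
  have hc0 : c ≠ 0 := by linarith
  have hz0 : z ≠ 0 := by intro h; rw [h] at hz; simp at hz
  set r := ‖z‖ with hr_def
  set φ := Complex.arg z with hφ_def
  have hr : 0 < r := norm_pos_iff.mpr hz0
  have hφmem : φ ∈ Set.Ioc (-π) π := Complex.arg_mem_Ioc z
  have hφ0 : 0 ≤ φ := by
    by_contra h
    push_neg at h
    have := Complex.arg_neg_iff.mp h
    linarith
  have hφpos : 0 < φ := by
    rcases hφ0.lt_or_eq with h | h
    · exact h
    · exfalso
      have := (Complex.arg_eq_zero_iff.mp h.symm).2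
      linarith
  have hφlt : φ < π := Complex.arg_lt_pi_iff.mpr (Or.inr (ne_of_gt hz))
  have hpolar : z = (r : ℂ) * Complex.exp ((φ : ℂ) * Complex.I) :=
    (Complex.norm_mul_exp_arg_mul_I z).symm
  -- the auxiliary multiplier
  set u : ℂ := ((r ^ (c - 2) : ℝ) : ℂ) * Complex.exp (((c - 2) * φ : ℝ) * Complex.I) with hu_def
  have hu : u ≠ 0 := polar_ne_zero _ _ (Real.rpow_pos_of_pos hr _)
  have hrr : r * r * r ^ (c - 2) = r ^ c := by
    have h2 : r * r = r ^ (2:ℝ) := by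
      rw [show (2:ℝ) = ((2:ℕ):ℝ) by norm_num, Real.rpow_natCast]; ring
    rw [h2, ← Real.rpow_add hr]; ring_nf
  have hL : (A : ℂ) * z ^ 2 * u = (A : ℂ) * ((r ^ c : ℝ) : ℂ) *
      Complex.exp (((c * φ : ℝ) : ℂ) * Complex.I) := by
    rw [hu_def, hpolar]
    rw [show ((r:ℂ) * Complex.exp ((φ:ℂ) * Complex.I)) ^ 2
        = (r:ℂ) * (r:ℂ) * (Complex.exp ((φ:ℂ) * Complex.I) * Complex.exp ((φ:ℂ) * Complex.I))
        by ring]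
    rw [← Complex.exp_add]
    calc (A:ℂ) * ((r:ℂ) * (r:ℂ) * Complex.exp ((φ:ℂ)*Complex.I + (φ:ℂ)*Complex.I)) *
          (((r ^ (c-2) : ℝ):ℂ) * Complex.exp ((((c-2)*φ : ℝ):ℂ) * Complex.I))
        = (A:ℂ) * ((r:ℂ) * (r:ℂ) * ((r ^ (c-2) : ℝ):ℂ)) *
          (Complex.exp ((φ:ℂ)*Complex.I + (φ:ℂ)*Complex.I) *
            Complex.exp ((((c-2)*φ : ℝ):ℂ) * Complex.I)) := by ring
      _ = _ := by
          rw [← Complex.exp_add]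
          congr 1
          · congr 1
            push_cast [← hrr]
            ring
          · congr 1
            push_cast
            ring
  have hcp : z ^ (((2 - c : ℝ)) : ℂ) = ((r ^ (2 - c) : ℝ) : ℂ) *
      Complex.exp ((((2 - c) * φ : ℝ) : ℂ) * Complex.I) := cpow_polar z hz0 (2 - c)
  have hR : (B : ℂ) * z ^ (((2 - c : ℝ)) : ℂ) * Complex.exp ((θ : ℂ) * Complex.I) * u
      = (B : ℂ) * Complex.exp ((θ : ℂ) * Complex.I) := by
    rw [hcp, hu_def]
    have hr1 : ((r ^ (2 - c) : ℝ) : ℂ) * ((r ^ (c - 2) : ℝ) : ℂ) = 1 := by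
      rw [← Complex.ofReal_mul, ← Real.rpow_add hr]
      norm_num
    have he1 : Complex.exp ((((2 - c) * φ : ℝ) : ℂ) * Complex.I) *
        Complex.exp ((((c - 2) * φ : ℝ) : ℂ) * Complex.I) = 1 := by
      rw [← Complex.exp_add, ← Complex.exp_zero]
      congr 1
      push_cast
      ring
    calc (B:ℂ) * (((r ^ (2-c) : ℝ):ℂ) * Complex.exp ((((2-c)*φ : ℝ):ℂ) * Complex.I)) *
          Complex.exp ((θ:ℂ)*Complex.I) *
          (((r ^ (c-2) : ℝ):ℂ) * Complex.exp ((((c-2)*φ : ℝ):ℂ) * Complex.I))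
        = (B:ℂ) * Complex.exp ((θ:ℂ)*Complex.I) *
          ((((r ^ (2-c) : ℝ):ℂ) * ((r ^ (c-2) : ℝ):ℂ)) *
           (Complex.exp ((((2-c)*φ : ℝ):ℂ) * Complex.I) *
            Complex.exp ((((c-2)*φ : ℝ):ℂ) * Complex.I))) := by ring
      _ = _ := by rw [hr1, he1]; ring
  have key1 : ((A : ℂ) * z ^ 2 - (B : ℂ) * z ^ (((2 - c : ℝ)) : ℂ) *
        Complex.exp ((θ : ℂ) * Complex.I) = 0)
      ↔ (A : ℂ) * ((r ^ c : ℝ) : ℂ) * Complex.exp (((c * φ : ℝ) : ℂ) * Complex.I)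
        = (B : ℂ) * Complex.exp ((θ : ℂ) * Complex.I) := by
    rw [sub_eq_zero]
    constructor
    · intro h
      rw [← hL, ← hR, h]
    · intro h
      have h2 : (A : ℂ) * z ^ 2 * u
          = (B : ℂ) * z ^ (((2 - c : ℝ)) : ℂ) * Complex.exp ((θ : ℂ) * Complex.I) * u := by
        rw [hL, hR, h]
      exact mul_right_cancel₀ hu h2
  have key2 : ((A : ℂ) * ((r ^ c : ℝ) : ℂ) * Complex.exp (((c * φ : ℝ) : ℂ) * Complex.I)
        = (B : ℂ) * Complex.exp ((θ : ℂ) * Complex.I))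
      ↔ (r ^ c = B / A ∧ ∃ n : ℤ, c * φ = θ + 2 * π * (n : ℝ)) := by
    constructor
    · intro h
      have habs : A * r ^ c = B := by
        have h2 := congrArg norm h
        simpa [norm_mul, Complex.norm_exp, Complex.norm_real, abs_of_pos hA, abs_of_pos hB,
          abs_of_pos (Real.rpow_pos_of_pos hr c)] using h2
      have hrc : r ^ c = B / A := by
        rw [eq_div_iff hA.ne', mul_comm]
        exact habs
      refine ⟨hrc, ?_⟩
      have hcoef : (A : ℂ) * ((r ^ c : ℝ) : ℂ) = (B : ℂ) := by
        rw [← Complex.ofReal_mul]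
        exact_mod_cast congrArg (Complex.ofReal) habs
      rw [hcoef] at h
      have hexp := mul_left_cancel₀ (by exact_mod_cast hB.ne' : (B:ℂ) ≠ 0) h
      obtain ⟨n, hn⟩ := Complex.exp_eq_exp_iff_exists_int.mp hexp
      refine ⟨n, ?_⟩
      have him := congrArg Complex.im hn
      simp at him
      linarith [him]
    · rintro ⟨h1, n, hn⟩
      rw [h1, hn]
      have hexp : Complex.exp (((θ + 2 * π * (n:ℝ) : ℝ) : ℂ) * Complex.I)
          = Complex.exp ((θ : ℂ) * Complex.I) := by
        rw [show (((θ + 2 * π * (n:ℝ) : ℝ)) : ℂ) * Complex.I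
            = (θ : ℂ) * Complex.I + (n : ℂ) * (2 * (π:ℂ) * Complex.I) by push_cast; ring,
          Complex.exp_add, Complex.exp_int_mul_two_pi_mul_I, mul_one]
      rw [hexp]
      congr 1
      rw [← Complex.ofReal_mul]
      congr 1
      field_simp
  rw [key1, key2]
  constructor
  · rintro ⟨h1, n, hn⟩
    have hrν : r = ν := by
      have hh : r ^ c = ν ^ c := h1.trans hνc.symm
      rcases lt_trichotomy r ν with h | h | h
      · exact absurd hh (ne_of_lt (Real.rpow_lt_rpow hr.le h (by linarith)))
      · exact h
      · exact absurd hh.symm (ne_of_lt (Real.rpow_lt_rpow hν.le h (by linarith)))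
    have hn0 : 0 ≤ n := by
      by_contra h
      push_neg at h
      have hn1 : n ≤ -1 := by omega
      have h' : (n : ℝ) ≤ -1 := by exact_mod_cast hn1
      nlinarith [mul_pos (show (0:ℝ) < c by linarith) hφpos]
    have hn2 : n ≤ 2 := by
      by_contra h
      push_neg at h
      have h' : (3 : ℝ) ≤ (n : ℝ) := by exact_mod_cast h
      have hlt : c * φ < 5 * π := by nlinarith
      nlinarith
    interval_cases n
    · left
      push_cast at hn
      rw [hpolar, hrν, show φ = θ / c by field_simp; linarith]
    · right; left
      push_cast at hn
      rw [hpolar, hrν, show φ = (θ + 2 * π) / c by field_simp; linarith]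
    · right; right
      push_cast at hn
      rw [hpolar, hrν, show φ = (θ + 4 * π) / c by field_simp; linarith]
  · intro h
    have harg : ∀ ψ : ℝ, 0 < ψ → ψ < π → z = (ν : ℂ) * Complex.exp ((ψ : ℂ) * Complex.I) →
        r = ν ∧ φ = ψ := by
      intro ψ h0 h1 hzψ
      have hmem : ψ ∈ Set.Ioc (-π) π := ⟨by linarith, h1.le⟩
      constructor
      · rw [hr_def, hzψ, abs_polar ν ψ hν.le]
      · rw [hφ_def, hzψ, arg_polar ν ψ hν hmem]
    rcases h with h | h | h
    · obtain ⟨hrν, hφψ⟩ := harg (θ / c) (by positivity) (by rw [div_lt_iff₀ (by linarith)]; nlinarith) h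
      refine ⟨by rw [hrν]; exact hνc, 0, ?_⟩
      rw [hφψ]
      push_cast
      field_simp
      all_goals ring
    · obtain ⟨hrν, hφψ⟩ := harg ((θ + 2 * π) / c) (by positivity) (by rw [div_lt_iff₀ (by linarith)]; nlinarith) h
      refine ⟨by rw [hrν]; exact hνc, 1, ?_⟩
      rw [hφψ]
      push_cast
      field_simp
      all_goals ring
    · obtain ⟨hrν, hφψ⟩ := harg ((θ + 4 * π) / c) (by positivity) (by rw [div_lt_iff₀ (by linarith)]; linarith) h
      refine ⟨by rw [hrν]; exact hνc, 2, ?_⟩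
      rw [hφψ]
      push_cast
      field_simp
      all_goals ring
/-- **Zeros of the structural function of the eigenproblem for integrated
fractional Brownian motion, case `H > 1/2`** (`α ∈ (0,1)`): the function
`Λ(z) = (λΓ(α)/c_α) z² - (π/cos(πα/2)) z^{α-3} e^{±(1-α)πi/2}` has exactly six
zeros off the real line, namely `±iν`, `±ν e^{i(π/2)(1-α)/(5-α)}` and
`±ν e^{i(π/2)(9-α)/(5-α)}`, where `ν > 0` satisfies
`ν^{α-5} = (λΓ(α)/c_α) cos(πα/2)/π`. -/
theorem ifbm_structural_function_zeros_large_H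
    (α lam : ℝ) (hα : α ∈ Set.Ioo (0 : ℝ) 1) (hlam : 0 < lam)
    (cα : ℝ) (hcα : cα = (1 - α / 2) * (1 - α))
    (Λ : ℂ → ℂ)
    (hup : ∀ z : ℂ, 0 < z.im → Λ z =
      ((lam * Real.Gamma α / cα : ℝ) : ℂ) * z ^ 2 -
        ((π / Real.cos (π * α / 2) : ℝ) : ℂ) * z ^ ((α : ℂ) - 3) *
          Complex.exp ((((1 - α) * π / 2 : ℝ) : ℂ) * Complex.I))
    (hdown : ∀ z : ℂ, z.im < 0 → Λ z =
      ((lam * Real.Gamma α / cα : ℝ) : ℂ) * z ^ 2 -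
        ((π / Real.cos (π * α / 2) : ℝ) : ℂ) * z ^ ((α : ℂ) - 3) *
          Complex.exp (-((((1 - α) * π / 2 : ℝ) : ℂ) * Complex.I)))
    (ν : ℝ) (hν : 0 < ν)
    (hνeq : ν ^ (α - 5) = (lam * Real.Gamma α / cα) * Real.cos (π * α / 2) / π) :
    {z : ℂ | z.im ≠ 0 ∧ Λ z = 0} =
      {(ν : ℂ) * Complex.I, -((ν : ℂ) * Complex.I),
        (ν : ℂ) * Complex.exp ((((π / 2) * (1 - α) / (5 - α) : ℝ) : ℂ) * Complex.I),
        -((ν : ℂ) * Complex.exp ((((π / 2) * (1 - α) / (5 - α) : ℝ) : ℂ) * Complex.I)),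
        (ν : ℂ) * Complex.exp ((((π / 2) * (9 - α) / (5 - α) : ℝ) : ℂ) * Complex.I),
        -((ν : ℂ) * Complex.exp ((((π / 2) * (9 - α) / (5 - α) : ℝ) : ℂ) * Complex.I))} := by
  obtain ⟨hα0, hα1⟩ := hα
  have hπ : (0:ℝ) < π := Real.pi_pos
  have hcα0 : 0 < cα := by rw [hcα]; nlinarith
  have hA : 0 < lam * Real.Gamma α / cα :=
    div_pos (mul_pos hlam (Real.Gamma_pos_of_pos hα0)) hcα0
  have hcos : 0 < Real.cos (π * α / 2) :=
    Real.cos_pos_of_mem_Ioo ⟨by nlinarith, by nlinarith⟩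
  have hB : 0 < π / Real.cos (π * α / 2) := div_pos hπ hcos
  have hθ0 : 0 < (1 - α) * π / 2 := by nlinarith
  have hθ2 : (1 - α) * π / 2 < π / 2 := by nlinarith
  have hc4 : 4 < 5 - α := by linarith
  have hc5 : 5 - α < 5 := by linarith
  have hc0 : (5 : ℝ) - α ≠ 0 := by linarith
  have hθ4 : (1 - α) * π / 2 + 4 * π < (5 - α) * π := by nlinarith
  have hνc : ν ^ (5 - α) = (π / Real.cos (π * α / 2)) / (lam * Real.Gamma α / cα) := by
    have h1 : ν ^ (α - 5) = (lam * Real.Gamma α / cα) / (π / Real.cos (π * α / 2)) := by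
      rw [div_div_eq_mul_div]; exact hνeq
    have h2 : ν ^ (α - 5) = (ν ^ (5 - α))⁻¹ := by
      rw [show α - 5 = -(5 - α) by ring, Real.rpow_neg hν.le]
    rw [h2, inv_eq_iff_eq_inv, inv_div] at h1
    exact h1
  -- angle facts
  set a1 : ℝ := π / 2 * (1 - α) / (5 - α) with ha1_def
  set a3 : ℝ := π / 2 * (9 - α) / (5 - α) with ha3_def
  have ha1pos : 0 < a1 := div_pos (by nlinarith) (by linarith)
  have ha1lt : a1 < π := by rw [ha1_def, div_lt_iff₀ (by linarith : (0:ℝ) < 5 - α)]; nlinarith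
  have ha3pos : 0 < a3 := div_pos (by nlinarith) (by linarith)
  have ha3lt : a3 < π := by rw [ha3_def, div_lt_iff₀ (by linarith : (0:ℝ) < 5 - α)]; nlinarith
  have hsum : a1 + a3 = π := by rw [ha1_def, ha3_def]; field_simp; ring
  have hsumC : (a1 : ℂ) + (a3 : ℂ) = (π : ℂ) := by exact_mod_cast hsum
  have hI : Complex.exp (((π / 2 : ℝ) : ℂ) * Complex.I) = Complex.I := by
    rw [Complex.exp_mul_I]
    push_cast
    simp
  -- the key characterization on the upper half plane
  have key : ∀ z : ℂ, 0 < z.im → (Λ z = 0 ↔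
      (z = (ν : ℂ) * Complex.exp ((a1 : ℂ) * Complex.I) ∨
       z = (ν : ℂ) * Complex.I ∨
       z = (ν : ℂ) * Complex.exp ((a3 : ℂ) * Complex.I))) := by
    intro z hz
    rw [hup z hz,
      show (α : ℂ) - 3 = ((2 - (5 - α) : ℝ) : ℂ) by push_cast; ring,
      upper_char (lam * Real.Gamma α / cα) (π / Real.cos (π * α / 2))
        ((1 - α) * π / 2) (5 - α) ν hA hB hν hθ0 hθ2 hc4 hc5 hθ4 hνc z hz,
      show (1 - α) * π / 2 / (5 - α) = a1 by rw [ha1_def]; ring,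
      show ((1 - α) * π / 2 + 2 * π) / (5 - α) = π / 2 by field_simp; ring,
      show ((1 - α) * π / 2 + 4 * π) / (5 - α) = a3 by rw [ha3_def]; ring,
      hI]
  -- conjugation symmetry
  have hΛconj : ∀ z : ℂ, 0 < z.im →
      Λ ((starRingEnd ℂ) z) = (starRingEnd ℂ) (Λ z) := by
    intro z hz
    have hz0 : z ≠ 0 := by intro h; rw [h] at hz; simp at hz
    have hargπ : z.arg ≠ π :=
      ne_of_lt (Complex.arg_lt_pi_iff.mpr (Or.inr (ne_of_gt hz)))
    have hdownz : ((starRingEnd ℂ) z).im < 0 := by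
      rw [Complex.conj_im]; linarith
    have hcpow : (starRingEnd ℂ) (z ^ ((α : ℂ) - 3))
        = ((starRingEnd ℂ) z) ^ ((α : ℂ) - 3) := by
      have hn : (starRingEnd ℂ) ((α : ℂ) - 3) = (α : ℂ) - 3 := by
        rw [map_sub, Complex.conj_ofReal, map_ofNat]
      have h := Complex.conj_cpow z ((α : ℂ) - 3) hargπ
      rw [hn] at h
      exact h.symm
    have hexpconj : (starRingEnd ℂ) (Complex.exp ((((1 - α) * π / 2 : ℝ) : ℂ) * Complex.I))
        = Complex.exp (-((((1 - α) * π / 2 : ℝ) : ℂ) * Complex.I)) := by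
      rw [← Complex.exp_conj, map_mul, Complex.conj_ofReal, Complex.conj_I]
      ring_nf
    rw [hdown _ hdownz, hup z hz, map_sub, map_mul, map_mul, map_mul, map_pow,
      Complex.conj_ofReal, Complex.conj_ofReal, hcpow, hexpconj]
  -- conjugates of the root candidates
  have hexpneg : ∀ t : ℝ, (starRingEnd ℂ) (Complex.exp ((t : ℂ) * Complex.I))
      = Complex.exp (-((t : ℂ) * Complex.I)) := by
    intro t
    rw [← Complex.exp_conj, map_mul, Complex.conj_ofReal, Complex.conj_I]
    ring_nf
  have hflip : Complex.exp (-((a1 : ℂ) * Complex.I))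
      = -Complex.exp ((a3 : ℂ) * Complex.I) := by
    have h2pi : Complex.exp (-(2 * (π : ℂ) * Complex.I)) = 1 := by
      simpa using Complex.exp_int_mul_two_pi_mul_I (-1)
    rw [show -((a1 : ℂ) * Complex.I)
        = ((a3 : ℂ) * Complex.I + (π : ℂ) * Complex.I) + -(2 * (π : ℂ) * Complex.I) by
        linear_combination (-Complex.I) * hsumC,
      Complex.exp_add, h2pi, mul_one, Complex.exp_add, Complex.exp_pi_mul_I]
    ring
  have hflip' : Complex.exp (-((a3 : ℂ) * Complex.I))
      = -Complex.exp ((a1 : ℂ) * Complex.I) := by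
    have h2pi : Complex.exp (-(2 * (π : ℂ) * Complex.I)) = 1 := by
      simpa using Complex.exp_int_mul_two_pi_mul_I (-1)
    rw [show -((a3 : ℂ) * Complex.I)
        = ((a1 : ℂ) * Complex.I + (π : ℂ) * Complex.I) + -(2 * (π : ℂ) * Complex.I) by
        linear_combination (-Complex.I) * hsumC,
      Complex.exp_add, h2pi, mul_one, Complex.exp_add, Complex.exp_pi_mul_I]
    ring
  have hconjE1 : (starRingEnd ℂ) ((ν : ℂ) * Complex.exp ((a1 : ℂ) * Complex.I))
      = -((ν : ℂ) * Complex.exp ((a3 : ℂ) * Complex.I)) := by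
    rw [map_mul, Complex.conj_ofReal, hexpneg, hflip]; ring
  have hconjE3 : (starRingEnd ℂ) ((ν : ℂ) * Complex.exp ((a3 : ℂ) * Complex.I))
      = -((ν : ℂ) * Complex.exp ((a1 : ℂ) * Complex.I)) := by
    rw [map_mul, Complex.conj_ofReal, hexpneg, hflip']; ring
  have hconjE2 : (starRingEnd ℂ) ((ν : ℂ) * Complex.I) = -((ν : ℂ) * Complex.I) := by
    rw [map_mul, Complex.conj_ofReal, Complex.conj_I]; ring
  -- imaginary parts of the candidates
  have hE1im : 0 < ((ν : ℂ) * Complex.exp ((a1 : ℂ) * Complex.I)).im := by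
    rw [im_polar]
    exact mul_pos hν (Real.sin_pos_of_pos_of_lt_pi ha1pos ha1lt)
  have hE3im : 0 < ((ν : ℂ) * Complex.exp ((a3 : ℂ) * Complex.I)).im := by
    rw [im_polar]
    exact mul_pos hν (Real.sin_pos_of_pos_of_lt_pi ha3pos ha3lt)
  have hE2im : 0 < ((ν : ℂ) * Complex.I).im := by simpa using hν
  -- the candidates are zeros
  have hΛE1 : Λ ((ν : ℂ) * Complex.exp ((a1 : ℂ) * Complex.I)) = 0 :=
    (key _ hE1im).mpr (Or.inl rfl)
  have hΛE2 : Λ ((ν : ℂ) * Complex.I) = 0 :=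
    (key _ hE2im).mpr (Or.inr (Or.inl rfl))
  have hΛE3 : Λ ((ν : ℂ) * Complex.exp ((a3 : ℂ) * Complex.I)) = 0 :=
    (key _ hE3im).mpr (Or.inr (Or.inr rfl))
  have hΛnE3 : Λ (-((ν : ℂ) * Complex.exp ((a3 : ℂ) * Complex.I))) = 0 := by
    rw [← hconjE1, hΛconj _ hE1im, hΛE1, map_zero]
  have hΛnE1 : Λ (-((ν : ℂ) * Complex.exp ((a1 : ℂ) * Complex.I))) = 0 := by
    rw [← hconjE3, hΛconj _ hE3im, hΛE3, map_zero]
  have hΛnE2 : Λ (-((ν : ℂ) * Complex.I)) = 0 := by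
    rw [← hconjE2, hΛconj _ hE2im, hΛE2, map_zero]
  ext z
  simp only [Set.mem_setOf_eq, Set.mem_insert_iff, Set.mem_singleton_iff]
  constructor
  · rintro ⟨hzim, hzero⟩
    rcases lt_trichotomy z.im 0 with hneg | h0 | hpos
    · have hwim : 0 < ((starRingEnd ℂ) z).im := by rw [Complex.conj_im]; linarith
      have hzw : z = (starRingEnd ℂ) ((starRingEnd ℂ) z) := by
        rw [Complex.conj_conj]
      have hΛw0 : Λ ((starRingEnd ℂ) z) = 0 := by
        have h1 : (starRingEnd ℂ) (Λ ((starRingEnd ℂ) z)) = 0 := by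
          rw [← hΛconj _ hwim, ← hzw, hzero]
        simpa using congrArg (starRingEnd ℂ) h1
      rcases (key _ hwim).mp hΛw0 with h | h | h
      · have : z = -((ν : ℂ) * Complex.exp ((a3 : ℂ) * Complex.I)) := by
          rw [hzw, h, hconjE1]
        exact Or.inr (Or.inr (Or.inr (Or.inr (Or.inr this))))
      · have : z = -((ν : ℂ) * Complex.I) := by
          rw [hzw, h, hconjE2]
        exact Or.inr (Or.inl this)
      · have : z = -((ν : ℂ) * Complex.exp ((a1 : ℂ) * Complex.I)) := by
          rw [hzw, h, hconjE3]
        exact Or.inr (Or.inr (Or.inr (Or.inl this)))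
    · exact absurd h0 hzim
    · rcases (key z hpos).mp hzero with h | h | h
      · exact Or.inr (Or.inr (Or.inl h))
      · exact Or.inl h
      · exact Or.inr (Or.inr (Or.inr (Or.inr (Or.inl h))))
  · intro h
    rcases h with h | h | h | h | h | h <;> subst h
    · exact ⟨hE2im.ne', hΛE2⟩
    · refine ⟨?_, hΛnE2⟩
      rw [Complex.neg_im]
      simpa using (neg_lt_zero.mpr hE2im).ne
    · exact ⟨hE1im.ne', hΛE1⟩
    · refine ⟨?_, hΛnE1⟩
      rw [Complex.neg_im]
      exact (neg_lt_zero.mpr hE1im).ne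
    · exact ⟨hE3im.ne', hΛE3⟩
    · refine ⟨?_, hΛnE3⟩
      rw [Complex.neg_im]
      exact (neg_lt_zero.mpr hE3im).ne
end

section
/- Let α∈(1,2), λ>0 and c_α=(1−α/2)(1−α)<0. Define Λ on ℂ∖ℝ by Λ(z) = (λΓ(α)/|c_α|)z² − (π/|cos(πα/2)|)·z^{α−3}·e^{(1−α)πi/2} for Im(z)>0, and with e^{−(1−α)πi/2} for Im(z)<0 (principal branch powers). Then Λ has exactly two zeros in ℂ∖ℝ, namely z = iν and z = −iν, where ν>0 is determined by ν^{α−5} = (λΓ(α)/|c_α|)·|cos(πα/2)|/π. -/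
open Complex
open scoped Real

lemma ifbm_core_eq (A B θ α : ℝ) (hA : 0 < A) (hB : 0 < B) (z : ℂ) (hz : z ≠ 0)
    (heq : ((A : ℝ) : ℂ) * z ^ 2 =
      ((B : ℝ) : ℂ) * z ^ ((α : ℂ) - 3) * Complex.exp ((θ : ℂ) * Complex.I)) :
    (5 - α) * Real.log (‖z‖) = Real.log B - Real.log A ∧
    ∃ n : ℤ, (5 - α) * Complex.arg z = θ + 2 * π * n := by
  have h2 : z ^ 2 = Complex.exp (2 * Complex.log z) := by
    have := Complex.exp_nat_mul (Complex.log z) 2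
    rw [Complex.exp_log hz] at this
    push_cast at this
    rw [this]
  have hcp : z ^ ((α : ℂ) - 3) = Complex.exp (((α : ℂ) - 3) * Complex.log z) := by
    rw [Complex.cpow_def_of_ne_zero hz, mul_comm]
  have hAe : ((A : ℝ) : ℂ) = Complex.exp ((Real.log A : ℝ) : ℂ) := by
    rw [← Complex.ofReal_exp, Real.exp_log hA]
  have hBe : ((B : ℝ) : ℂ) = Complex.exp ((Real.log B : ℝ) : ℂ) := by
    rw [← Complex.ofReal_exp, Real.exp_log hB]
  rw [h2, hcp, hAe, hBe, ← Complex.exp_add, ← Complex.exp_add, ← Complex.exp_add,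
    Complex.exp_eq_exp_iff_exists_int] at heq
  obtain ⟨n, hn⟩ := heq
  have hre := congrArg Complex.re hn
  have him := congrArg Complex.im hn
  simp [Complex.add_re, Complex.add_im, Complex.mul_re, Complex.mul_im, Complex.log_re,
    Complex.log_im, Complex.ofReal_re, Complex.ofReal_im, Complex.I_re, Complex.I_im] at hre him
  constructor
  · linarith [hre]
  · exact ⟨n, by linarith [him]⟩

lemma ifbm_exp_ofReal_mul_I (x : ℝ) :
    Complex.exp ((x : ℂ) * Complex.I) = (Real.cos x : ℂ) + (Real.sin x : ℂ) * Complex.I := by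
  rw [Complex.exp_mul_I, ← Complex.ofReal_cos, ← Complex.ofReal_sin]


lemma ifbm_angle_pos (α φ : ℝ) (n : ℤ) (hα1 : 1 < α) (hα2 : α < 2)
    (hφ1 : 0 < φ) (hφ2 : φ < π)
    (hang : (5 - α) * φ = (1 - α) * π / 2 + 2 * π * (n : ℝ)) : φ = π / 2 := by
  have hπ : (0 : ℝ) < π := Real.pi_pos
  have h5α : (0 : ℝ) < 5 - α := by linarith
  have hp1 : 0 < (5 - α) * φ := mul_pos h5α hφ1
  have hp2 : (5 - α) * φ < (5 - α) * π := by
    exact mul_lt_mul_of_pos_left hφ2 h5α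
  have hp3 : 0 < (α - 1) * π := mul_pos (by linarith) hπ
  have hlb : 0 < 2 * π * (n : ℝ) := by nlinarith
  have hub : 2 * π * (n : ℝ) < 4 * π := by nlinarith
  have hn0 : (0 : ℝ) < (n : ℝ) := by nlinarith
  have hn2 : (n : ℝ) < 2 := by nlinarith
  have hn : n = 1 := by
    have h1 : 0 < n := by exact_mod_cast hn0
    have h2 : n < (2 : ℤ) := by exact_mod_cast hn2
    omega
  apply mul_left_cancel₀ h5α.ne'
  rw [hang, hn]; push_cast; ring

lemma ifbm_angle_neg (α φ : ℝ) (n : ℤ) (hα1 : 1 < α) (hα2 : α < 2)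
    (hφ1 : -π < φ) (hφ2 : φ < 0)
    (hang : (5 - α) * φ = (α - 1) * π / 2 + 2 * π * (n : ℝ)) : φ = -(π / 2) := by
  have hπ : (0 : ℝ) < π := Real.pi_pos
  have h5α : (0 : ℝ) < 5 - α := by linarith
  have hp1 : (5 - α) * φ < 0 := mul_neg_of_pos_of_neg h5α hφ2
  have hp2 : (5 - α) * -π < (5 - α) * φ := mul_lt_mul_of_pos_left hφ1 h5α
  have hp3 : 0 < (α - 1) * π := mul_pos (by linarith) hπ
  have hub : 2 * π * (n : ℝ) < 0 := by nlinarith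
  have hlb : -(4 * π) < 2 * π * (n : ℝ) := by nlinarith
  have hn0 : (n : ℝ) < 0 := by nlinarith
  have hn2 : (-2 : ℝ) < (n : ℝ) := by nlinarith
  have hn : n = -1 := by
    have h1 : n < 0 := by exact_mod_cast hn0
    have h2 : (-2 : ℤ) < n := by exact_mod_cast hn2
    omega
  apply mul_left_cancel₀ h5α.ne'
  rw [hang, hn]; push_cast; ring

/-- **Zeros of the structural function of the eigenproblem for integrated
fractional Brownian motion, case `H < 1/2`** (`α ∈ (1,2)`): the function
`Λ(z) = (λΓ(α)/|c_α|) z² - (π/|cos(πα/2)|) z^{α-3} e^{±(1-α)πi/2}` has exactly two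
zeros off the real line, namely `±iν`, where `ν > 0` satisfies
`ν^{α-5} = (λΓ(α)/|c_α|) |cos(πα/2)|/π`. -/
theorem ifbm_structural_function_zeros_small_H
    (α lam : ℝ) (hα : α ∈ Set.Ioo (1 : ℝ) 2) (hlam : 0 < lam)
    (cα : ℝ) (hcα : cα = (1 - α / 2) * (1 - α))
    (Λ : ℂ → ℂ)
    (hup : ∀ z : ℂ, 0 < z.im → Λ z =
      ((lam * Real.Gamma α / |cα| : ℝ) : ℂ) * z ^ 2 -
        ((π / |Real.cos (π * α / 2)| : ℝ) : ℂ) * z ^ ((α : ℂ) - 3) *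
          Complex.exp ((((1 - α) * π / 2 : ℝ) : ℂ) * Complex.I))
    (hdown : ∀ z : ℂ, z.im < 0 → Λ z =
      ((lam * Real.Gamma α / |cα| : ℝ) : ℂ) * z ^ 2 -
        ((π / |Real.cos (π * α / 2)| : ℝ) : ℂ) * z ^ ((α : ℂ) - 3) *
          Complex.exp (-((((1 - α) * π / 2 : ℝ) : ℂ) * Complex.I)))
    (ν : ℝ) (hν : 0 < ν)
    (hνeq : ν ^ (α - 5) =
      (lam * Real.Gamma α / |cα|) * |Real.cos (π * α / 2)| / π) :
    {z : ℂ | z.im ≠ 0 ∧ Λ z = 0} =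
      {(ν : ℂ) * Complex.I, -((ν : ℂ) * Complex.I)} := by
  obtain ⟨hα1, hα2⟩ := hα
  have hπ : (0 : ℝ) < π := Real.pi_pos
  set A := lam * Real.Gamma α / |cα| with hAdef
  set B := π / |Real.cos (π * α / 2)| with hBdef
  have hΓ : 0 < Real.Gamma α := Real.Gamma_pos_of_pos (by linarith)
  have hcαne : cα ≠ 0 := by
    rw [hcα]
    have h1 : 0 < 1 - α / 2 := by linarith
    have h2 : 1 - α < 0 := by linarith
    nlinarith
  have hcos : Real.cos (π * α / 2) < 0 := by
    apply Real.cos_neg_of_pi_div_two_lt_of_lt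
    · nlinarith
    · nlinarith
  have habscos : 0 < |Real.cos (π * α / 2)| := abs_pos.mpr hcos.ne
  have hA : 0 < A := div_pos (mul_pos hlam hΓ) (abs_pos.mpr hcαne)
  have hB : 0 < B := div_pos hπ habscos
  have h5α : (0 : ℝ) < 5 - α := by linarith
  -- key relations
  have hBA : ν ^ (5 - α) = B / A := by
    have h5 : ν ^ (5 - α) = (ν ^ (α - 5))⁻¹ := by
      rw [show (5 - α) = -(α - 5) by ring, Real.rpow_neg hν.le]
    have hq : B / A = (A * |Real.cos (π * α / 2)| / π)⁻¹ := by
      rw [hBdef]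
      field_simp
    rw [h5, hνeq, hq]
  have hνlog : (5 - α) * Real.log ν = Real.log B - Real.log A := by
    have := Real.log_rpow hν (5 - α)
    rw [hBA, Real.log_div hB.ne' hA.ne'] at this
    linarith [this]
  have hν25 : ν ^ (5 - α) * ν ^ (α - 3) = ν ^ (2 : ℕ) := by
    rw [← Real.rpow_add hν]
    norm_num
  have hreal : A * ν ^ (2 : ℕ) = B * ν ^ (α - 3) := by
    have hBeq : B = A * ν ^ (5 - α) := by
      rw [hBA]; field_simp
    rw [hBeq]
    nlinarith [hν25]
  -- cpow values at ±iν
  have hw0 : ((ν : ℂ) * Complex.I) ≠ 0 := by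
    simp [Complex.ext_iff, hν.ne']
  have habsw : ‖(ν : ℂ) * Complex.I‖ = ν := by
    simp [abs_of_pos hν]
  have hargw : Complex.arg ((ν : ℂ) * Complex.I) = π / 2 := by
    rw [Complex.arg_real_mul _ hν, Complex.arg_I]
  have hlogw : Complex.log ((ν : ℂ) * Complex.I) =
      ((Real.log ν : ℝ) : ℂ) + ((π / 2 : ℝ) : ℂ) * Complex.I := by
    apply Complex.ext
    · simp [Complex.log_re, habsw]
    · simp [Complex.log_im, hargw]
  have hargw' : Complex.arg (-((ν : ℂ) * Complex.I)) = -(π / 2) := by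
    rw [show -((ν : ℂ) * Complex.I) = (ν : ℂ) * (-Complex.I) by ring,
      Complex.arg_real_mul _ hν, Complex.arg_neg_I]
  have hlogw' : Complex.log (-((ν : ℂ) * Complex.I)) =
      ((Real.log ν : ℝ) : ℂ) + ((-(π / 2) : ℝ) : ℂ) * Complex.I := by
    apply Complex.ext
    · simp [Complex.log_re, habsw]
    · simp [Complex.log_im, hargw']
  have hexpr : Real.exp ((α - 3) * Real.log ν) = ν ^ (α - 3) := by
    rw [Real.rpow_def_of_pos hν]; ring_nf
  have hcpw : ((ν : ℂ) * Complex.I) ^ ((α : ℂ) - 3) =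
      ((ν ^ (α - 3) : ℝ) : ℂ) * Complex.exp ((((α - 3) * (π / 2) : ℝ) : ℂ) * Complex.I) := by
    rw [Complex.cpow_def_of_ne_zero hw0]
    have hlin : Complex.log ((ν : ℂ) * Complex.I) * ((α : ℂ) - 3) =
        (((α - 3) * Real.log ν : ℝ) : ℂ) + (((α - 3) * (π / 2) : ℝ) : ℂ) * Complex.I := by
      rw [hlogw]; push_cast; ring
    rw [hlin, Complex.exp_add, ← Complex.ofReal_exp, hexpr]
  have hcpw' : (-((ν : ℂ) * Complex.I)) ^ ((α : ℂ) - 3) =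
      ((ν ^ (α - 3) : ℝ) : ℂ) * Complex.exp ((((α - 3) * (-(π / 2)) : ℝ) : ℂ) * Complex.I) := by
    rw [Complex.cpow_def_of_ne_zero (neg_ne_zero.mpr hw0)]
    have hlin : Complex.log (-((ν : ℂ) * Complex.I)) * ((α : ℂ) - 3) =
        (((α - 3) * Real.log ν : ℝ) : ℂ) + (((α - 3) * (-(π / 2)) : ℝ) : ℂ) * Complex.I := by
      rw [hlogw']; push_cast; ring
    rw [hlin, Complex.exp_add, ← Complex.ofReal_exp, hexpr]
  have hsq : ((ν : ℂ) * Complex.I) ^ 2 = -(((ν ^ (2 : ℕ) : ℝ)) : ℂ) := by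
    rw [mul_pow, Complex.I_sq]; push_cast; ring
  -- Λ vanishes at ±iν
  have hΛup : Λ ((ν : ℂ) * Complex.I) = 0 := by
    rw [hup _ (by simp [hν])]
    rw [hcpw, hsq, mul_assoc, mul_assoc, ← Complex.exp_add]
    rw [show ((((α - 3) * (π / 2) : ℝ)) : ℂ) * Complex.I + (((1 - α) * π / 2 : ℝ) : ℂ) * Complex.I
        = ((-π : ℝ) : ℂ) * Complex.I by push_cast; ring]
    rw [ifbm_exp_ofReal_mul_I]
    simp only [Real.cos_neg, Real.sin_neg, Real.cos_pi, Real.sin_pi, neg_zero]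
    rw [show ((A : ℝ) : ℂ) * -(((ν ^ (2 : ℕ) : ℝ)) : ℂ) -
        ((B : ℝ) : ℂ) * (((ν ^ (α - 3) : ℝ) : ℂ) * (((-1 : ℝ) : ℂ) + ((0 : ℝ) : ℂ) * Complex.I))
        = -((((A * ν ^ (2 : ℕ)) : ℝ) : ℂ) - (((B * ν ^ (α - 3)) : ℝ) : ℂ)) by push_cast; ring]
    rw [hreal]
    ring
  have hΛdown : Λ (-((ν : ℂ) * Complex.I)) = 0 := by
    rw [hdown _ (by simp [hν])]
    have hsq' : (-((ν : ℂ) * Complex.I)) ^ 2 = -(((ν ^ (2 : ℕ) : ℝ)) : ℂ) := by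
      rw [neg_pow, hsq]; ring
    rw [hcpw', hsq', mul_assoc, mul_assoc, ← Complex.exp_add]
    rw [show ((((α - 3) * (-(π / 2)) : ℝ)) : ℂ) * Complex.I +
        -((((1 - α) * π / 2 : ℝ) : ℂ) * Complex.I) = ((π : ℝ) : ℂ) * Complex.I by push_cast; ring]
    rw [ifbm_exp_ofReal_mul_I]
    simp only [Real.cos_pi, Real.sin_pi]
    rw [show ((A : ℝ) : ℂ) * -(((ν ^ (2 : ℕ) : ℝ)) : ℂ) -
        ((B : ℝ) : ℂ) * (((ν ^ (α - 3) : ℝ) : ℂ) * (((-1 : ℝ) : ℂ) + ((0 : ℝ) : ℂ) * Complex.I))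
        = -((((A * ν ^ (2 : ℕ)) : ℝ) : ℂ) - (((B * ν ^ (α - 3)) : ℝ) : ℂ)) by push_cast; ring]
    rw [hreal]
    ring
  -- main set equality
  ext z
  simp only [Set.mem_setOf_eq, Set.mem_insert_iff, Set.mem_singleton_iff]
  constructor
  · rintro ⟨him, hΛz⟩
    have hz : z ≠ 0 := by
      intro h; rw [h] at him; simp at him
    have habsz : 0 < ‖z‖ := norm_pos_iff.mpr hz
    have habs_of_log : ∀ h : (5 - α) * Real.log (‖z‖) = Real.log B - Real.log A,
        ‖z‖ = ν := by
      intro hlog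
      have hle : Real.log (‖z‖) = Real.log ν :=
        mul_left_cancel₀ h5α.ne' (by rw [hlog, hνlog])
      exact Real.log_injOn_pos (Set.mem_Ioi.mpr habsz) (Set.mem_Ioi.mpr hν) hle
    rcases lt_or_gt_of_ne him with hneg | hpos
    · -- lower half plane : z = -iν
      right
      have heq : ((A : ℝ) : ℂ) * z ^ 2 =
          ((B : ℝ) : ℂ) * z ^ ((α : ℂ) - 3) *
            Complex.exp ((((α - 1) * π / 2 : ℝ) : ℂ) * Complex.I) := by
        have h0 := hdown z hneg
        rw [hΛz] at h0
        have hexp : Complex.exp (-((((1 - α) * π / 2 : ℝ) : ℂ) * Complex.I)) =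
            Complex.exp ((((α - 1) * π / 2 : ℝ) : ℂ) * Complex.I) := by
          congr 1; push_cast; ring
        rw [hexp] at h0
        linear_combination -h0
      obtain ⟨hlog, n, hang⟩ := ifbm_core_eq A B ((α - 1) * π / 2) α hA hB z hz heq
      have habs : ‖z‖ = ν := habs_of_log hlog
      have hφ2 : z.arg < 0 := Complex.arg_neg_iff.mpr hneg
      have hφ1 : -π < z.arg := Complex.neg_pi_lt_arg z
      have hφ : z.arg = -(π / 2) :=
        ifbm_angle_neg α z.arg n hα1 hα2 hφ1 hφ2 hang
      have hz' := Complex.norm_mul_exp_arg_mul_I z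
      rw [habs, hφ] at hz'
      rw [← hz', ifbm_exp_ofReal_mul_I]
      simp [Real.cos_pi_div_two, Real.sin_pi_div_two]
    · -- upper half plane : z = iν
      left
      have heq : ((A : ℝ) : ℂ) * z ^ 2 =
          ((B : ℝ) : ℂ) * z ^ ((α : ℂ) - 3) *
            Complex.exp ((((1 - α) * π / 2 : ℝ) : ℂ) * Complex.I) := by
        have h0 := hup z hpos
        rw [hΛz] at h0
        linear_combination -h0
      obtain ⟨hlog, n, hang⟩ := ifbm_core_eq A B ((1 - α) * π / 2) α hA hB z hz heq
      have habs : ‖z‖ = ν := habs_of_log hlog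
      have hφ0 : 0 ≤ z.arg := Complex.arg_nonneg_iff.mpr hpos.le
      have hφ1 : 0 < z.arg := by
        rcases eq_or_lt_of_le hφ0 with h | h
        · exfalso
          have := (Complex.arg_eq_zero_iff.mp h.symm).2
          linarith [hpos]
        · exact h
      have hφ2 : z.arg < π := Complex.arg_lt_pi_iff.mpr (Or.inr hpos.ne')
      have hφ : z.arg = π / 2 :=
        ifbm_angle_pos α z.arg n hα1 hα2 hφ1 hφ2 hang
      have hz' := Complex.norm_mul_exp_arg_mul_I z
      rw [habs, hφ] at hz'
      rw [← hz']
      rw [ifbm_exp_ofReal_mul_I]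
      simp [Real.cos_pi_div_two, Real.sin_pi_div_two]
  · rintro (rfl | rfl)
    · exact ⟨by simp [hν.ne'], hΛup⟩
    · exact ⟨by simp [hν.ne'], hΛdown⟩
end

section
/- Let H∈(1/2,1), set α=2−2H∈(0,1) and c_α=(1−α/2)(1−α), let β∈ℝ and λ>0, and suppose the continuous function φ:[0,1]→ℝ satisfies the eigenproblem ∫₀¹ (∫₀ˣ∫₀ʸ e^{β(x−u)}e^{β(y−v)} c_α|u−v|^{−α} dv du) φ(y) dy = λφ(x) for all x∈[0,1]. Define ψ(x) = e^{−βx}∫ₓ¹ e^{βr}φ(r)dr. Then ψ is twice continuously differentiable, satisfies ∫₀¹ c_α|x−y|^{−α} ψ(y) dy = λ(β²ψ(x) − ψ''(x)) for all x∈[0,1], and obeys the boundary conditions ψ(1)=0 and ψ'(0)+βψ(0)=0. -/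
open MeasureTheory Set
open scoped Real

section Aux

open intervalIntegral

private lemma abs_rpow_intervalIntegrable {c : ℝ} (hc : -1 < c) (a b : ℝ) :
    IntervalIntegrable (fun t : ℝ => |t| ^ c) volume a b := by
  have key : ∀ d : ℝ, 0 ≤ d → IntervalIntegrable (fun t : ℝ => |t| ^ c) volume 0 d := by
    intro d hd
    rw [intervalIntegrable_iff, uIoc_of_le hd]
    have h1 : IntervalIntegrable (fun x : ℝ => x ^ c) volume 0 d := intervalIntegrable_rpow' hc
    rw [intervalIntegrable_iff, uIoc_of_le hd] at h1
    exact h1.congr_fun (fun t ht => by rw [abs_of_pos ht.1]) measurableSet_Ioc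
  have I : ∀ e : ℝ, IntervalIntegrable (fun t : ℝ => |t| ^ c) volume 0 e := by
    intro e
    rcases le_total 0 e with he | he
    · exact key e he
    · rw [IntervalIntegrable.iff_comp_neg]
      simpa [abs_neg] using key (-e) (by linarith)
  exact (I a).symm.trans (I b)

private lemma triangle_fubini (F G : ℝ → ℝ) (hF : IntervalIntegrable F volume 0 1)
    (hG : Continuous G) :
    (∫ y in (0:ℝ)..1, F y * ∫ r in y..1, G r) =
      ∫ r in (0:ℝ)..1, (∫ v in (0:ℝ)..r, F v) * G r := by
  set μ := volume.restrict (Ioc (0:ℝ) 1) with hμ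
  have hFi : Integrable F μ := by
    rw [intervalIntegrable_iff, uIoc_of_le (by norm_num : (0:ℝ) ≤ 1)] at hF
    exact hF
  have hGi : Integrable G μ := hG.integrableOn_Ioc
  have hprod : Integrable (fun p : ℝ × ℝ => F p.1 * G p.2) (μ.prod μ) := hFi.mul_prod hGi
  have hS : MeasurableSet {p : ℝ × ℝ | p.1 < p.2} := measurableSet_lt measurable_fst measurable_snd
  have hind : Integrable
      (Function.uncurry fun y r => ({p : ℝ × ℝ | p.1 < p.2}.indicator
        (fun p => F p.1 * G p.2)) (y, r)) (μ.prod μ) := by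
    have : (Function.uncurry fun y r => ({p : ℝ × ℝ | p.1 < p.2}.indicator
        (fun p => F p.1 * G p.2)) (y, r)) = {p : ℝ × ℝ | p.1 < p.2}.indicator
        (fun p => F p.1 * G p.2) := by
      ext p; rcases p with ⟨y, r⟩; rfl
    rw [this]
    exact hprod.indicator hS
  have swap := integral_integral_swap hind
  have inner1 : ∀ y ∈ Ioc (0:ℝ) 1,
      (∫ r, ({p : ℝ × ℝ | p.1 < p.2}.indicator (fun p => F p.1 * G p.2)) (y, r) ∂μ) =
        F y * ∫ r in y..1, G r := by
    intro y hy
    have hfun : (fun r => ({p : ℝ × ℝ | p.1 < p.2}.indicator (fun p => F p.1 * G p.2)) (y, r)) =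
        (Ioi y).indicator (fun r => F y * G r) := by
      ext r
      simp only [Set.indicator_apply, mem_setOf_eq, mem_Ioi]
    rw [hfun, MeasureTheory.integral_indicator measurableSet_Ioi, hμ,
      Measure.restrict_restrict measurableSet_Ioi]
    have hset : Ioi y ∩ Ioc (0:ℝ) 1 = Ioc y 1 := by
      ext t
      simp only [mem_inter_iff, mem_Ioi, mem_Ioc]
      constructor
      · rintro ⟨h1, _, h3⟩; exact ⟨h1, h3⟩
      · rintro ⟨h1, h2⟩; exact ⟨h1, lt_trans hy.1 h1, h2⟩
    rw [hset, MeasureTheory.integral_const_mul,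
      intervalIntegral.integral_of_le hy.2]
  have inner2 : ∀ r ∈ Ioc (0:ℝ) 1,
      (∫ y, ({p : ℝ × ℝ | p.1 < p.2}.indicator (fun p => F p.1 * G p.2)) (y, r) ∂μ) =
        (∫ v in (0:ℝ)..r, F v) * G r := by
    intro r hr
    have hfun : (fun y => ({p : ℝ × ℝ | p.1 < p.2}.indicator (fun p => F p.1 * G p.2)) (y, r)) =
        (Iio r).indicator (fun y => F y * G r) := by
      ext y
      simp only [Set.indicator_apply, mem_setOf_eq, mem_Iio]
    rw [hfun, MeasureTheory.integral_indicator measurableSet_Iio, hμ,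
      Measure.restrict_restrict measurableSet_Iio]
    have hset : Iio r ∩ Ioc (0:ℝ) 1 = Ioo 0 r := by
      ext t
      simp only [mem_inter_iff, mem_Iio, mem_Ioc, mem_Ioo]
      constructor
      · rintro ⟨h1, h2, _⟩; exact ⟨h2, h1⟩
      · rintro ⟨h1, h2⟩; exact ⟨h2, h1, le_trans h2.le hr.2⟩
    rw [hset, MeasureTheory.integral_mul_const, ← integral_Ioc_eq_integral_Ioo,
      intervalIntegral.integral_of_le hr.1.le]
  calc (∫ y in (0:ℝ)..1, F y * ∫ r in y..1, G r)
      = ∫ y, (∫ r, ({p : ℝ × ℝ | p.1 < p.2}.indicator (fun p => F p.1 * G p.2)) (y, r) ∂μ) ∂μ := by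
        rw [intervalIntegral.integral_of_le (by norm_num : (0:ℝ) ≤ 1), hμ]
        exact (setIntegral_congr_fun measurableSet_Ioc (fun y hy => (inner1 y hy))).symm
    _ = ∫ r, (∫ y, ({p : ℝ × ℝ | p.1 < p.2}.indicator (fun p => F p.1 * G p.2)) (y, r) ∂μ) ∂μ :=
        swap
    _ = ∫ r in (0:ℝ)..1, (∫ v in (0:ℝ)..r, F v) * G r := by
        rw [intervalIntegral.integral_of_le (by norm_num : (0:ℝ) ≤ 1), hμ]
        exact setIntegral_congr_fun measurableSet_Ioc (fun r hr => (inner2 r hr))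

private lemma rect_fubini (f : ℝ → ℝ → ℝ) (x : ℝ) (hx : 0 ≤ x)
    (hf : Continuous (Function.uncurry f)) :
    (∫ y in (0:ℝ)..1, ∫ u in (0:ℝ)..x, f u y) = ∫ u in (0:ℝ)..x, ∫ y in (0:ℝ)..1, f u y := by
  have hint : Integrable (Function.uncurry fun y u => f u y)
      ((volume.restrict (Ioc (0:ℝ) 1)).prod (volume.restrict (Ioc (0:ℝ) x))) := by
    rw [Measure.prod_restrict]
    have hc : Continuous (Function.uncurry fun y u => f u y) :=
      hf.comp continuous_swap
    have hcmp : IsCompact ((Icc (0:ℝ) 1) ×ˢ (Icc (0:ℝ) x)) := isCompact_Icc.prod isCompact_Icc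
    exact (hc.continuousOn.integrableOn_compact hcmp).mono_set
      (prod_mono Ioc_subset_Icc_self Ioc_subset_Icc_self)
  simp only [intervalIntegral.integral_of_le hx,
    intervalIntegral.integral_of_le (by norm_num : (0:ℝ) ≤ 1)]
  exact integral_integral_swap hint

private noncomputable def Ng (β α : ℝ) : ℝ → ℝ :=
  fun t => ∫ s in (0:ℝ)..t, Real.exp (β * s) * |s| ^ (-α)

private noncomputable def mk (β α cα : ℝ) : ℝ → ℝ → ℝ :=
  fun u y => cα * Real.exp (β * (y - u)) * (Ng β α u - Ng β α (u - y))

private lemma Ng_intervalIntegrable {β α : ℝ} (hα : -1 < -α) (a b : ℝ) :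
    IntervalIntegrable (fun s : ℝ => Real.exp (β * s) * |s| ^ (-α)) volume a b := by
  refine (abs_rpow_intervalIntegrable hα a b).continuousOn_mul
    (g := fun s => Real.exp (β * s)) ?_
  exact (Real.continuous_exp.comp (continuous_const.mul continuous_id)).continuousOn

private lemma Ng_continuous {β α : ℝ} (hα : -1 < -α) : Continuous (Ng β α) :=
  intervalIntegral.continuous_primitive (Ng_intervalIntegrable hα) 0

private lemma mk_continuous {β α cα : ℝ} (hα : -1 < -α) :
    Continuous (Function.uncurry (mk β α cα)) := by
  have hN := Ng_continuous (β := β) hα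
  show Continuous fun p : ℝ × ℝ =>
    cα * Real.exp (β * (p.2 - p.1)) * (Ng β α p.1 - Ng β α (p.1 - p.2))
  exact ((continuous_const.mul (Real.continuous_exp.comp
      (continuous_const.mul (continuous_snd.sub continuous_fst)))).mul
    ((hN.comp continuous_fst).sub (hN.comp (continuous_fst.sub continuous_snd))))

private lemma mk_eq {β α cα : ℝ} (hα : -1 < -α) (u y : ℝ) :
    mk β α cα u y = ∫ v in (0:ℝ)..y, Real.exp (β * (y - v)) * cα * |u - v| ^ (-α) := by
  have h1 : ∀ v : ℝ, Real.exp (β * (y - v)) * cα * |u - v| ^ (-α)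
      = (cα * Real.exp (β * (y - u))) * (Real.exp (β * (u - v)) * |u - v| ^ (-α)) := by
    intro v
    rw [show β * (y - v) = β * (y - u) + β * (u - v) by ring, Real.exp_add]
    ring
  simp only [h1]
  rw [intervalIntegral.integral_const_mul,
    intervalIntegral.integral_comp_sub_left (fun t => Real.exp (β * t) * |t| ^ (-α)) u]
  have h2 : Ng β α u - Ng β α (u - y)
      = ∫ x in (u - y)..(u - 0), Real.exp (β * x) * |x| ^ (-α) := by
    rw [sub_zero]
    simp only [Ng]
    exact intervalIntegral.integral_interval_sub_left
      (Ng_intervalIntegrable hα 0 u) (Ng_intervalIntegrable hα 0 (u - y))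
  rw [mk, ← h2]

end Aux

/-- **Reduction of the fractional Ornstein--Uhlenbeck eigenproblem (`H > 1/2`) to a
generalized eigenproblem.** If `φ` solves
`∫₀¹ (∫₀ˣ∫₀ʸ e^{β(x-u)} e^{β(y-v)} c_α |u-v|^{-α} dv du) φ(y) dy = λ φ(x)` on `[0,1]`
then `ψ(x) = e^{-βx} ∫ₓ¹ e^{βr} φ(r) dr` is twice continuously differentiable,
satisfies `∫₀¹ c_α |x-y|^{-α} ψ(y) dy = λ (β² ψ(x) - ψ''(x))` on `[0,1]`, and obeys
`ψ(1) = 0`, `ψ'(0) + β ψ(0) = 0`. -/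
theorem fou_generalized_eigenproblem
    (H : ℝ) (hH : H ∈ Set.Ioo (1 / 2 : ℝ) 1)
    (α : ℝ) (hα : α = 2 - 2 * H)
    (cα : ℝ) (hcα : cα = (1 - α / 2) * (1 - α))
    (β lam : ℝ) (hlam : 0 < lam)
    (φ : ℝ → ℝ) (hφcont : ContinuousOn φ (Set.Icc 0 1))
    (hφeig : ∀ x ∈ Set.Icc (0 : ℝ) 1,
      ∫ y in (0 : ℝ)..1,
        (∫ u in (0 : ℝ)..x, ∫ v in (0 : ℝ)..y,
          Real.exp (β * (x - u)) * Real.exp (β * (y - v)) * cα * |u - v| ^ (-α)) *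
        φ y = lam * φ x)
    (ψ : ℝ → ℝ)
    (hψ : ∀ x, ψ x = Real.exp (-(β * x)) * ∫ r in x..1, Real.exp (β * r) * φ r) :
    ContDiffOn ℝ 2 ψ (Set.Icc 0 1) ∧
    (∀ x ∈ Set.Icc (0 : ℝ) 1,
      ∫ y in (0 : ℝ)..1, cα * |x - y| ^ (-α) * ψ y =
        lam * (β ^ 2 * ψ x - iteratedDerivWithin 2 ψ (Set.Icc 0 1) x)) ∧
    ψ 1 = 0 ∧
    derivWithin ψ (Set.Icc 0 1) 0 + β * ψ 0 = 0 := by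
  obtain ⟨hH1, hH2⟩ := hH
  have hexp : (-1:ℝ) < -α := by rw [hα]; linarith
  have h01 : (0:ℝ) ≤ 1 := zero_le_one
  have h0m : (0:ℝ) ∈ Icc (0:ℝ) 1 := ⟨le_rfl, h01⟩
  have hUD : UniqueDiffOn ℝ (Icc (0:ℝ) 1) := uniqueDiffOn_Icc one_pos
  have hlam' : lam ≠ 0 := ne_of_gt hlam
  -- continuous extension of φ
  set φc : ℝ → ℝ := fun t => φ (max 0 (min 1 t)) with hφcdef
  have hmem : ∀ t : ℝ, max 0 (min 1 t) ∈ Icc (0:ℝ) 1 := fun t =>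
    ⟨le_max_left _ _, max_le h01 (min_le_left _ _)⟩
  have hφceq : ∀ t ∈ Icc (0:ℝ) 1, φc t = φ t := by
    intro t ht
    simp only [hφcdef]
    rw [min_eq_right ht.2, max_eq_right ht.1]
  have hφccont : Continuous φc :=
    hφcont.comp_continuous (continuous_const.max (continuous_const.min continuous_id)) hmem
  -- φ 0 = 0
  have hφ0 : φ 0 = 0 := by
    have h : lam * φ 0 = 0 := by
      simpa [intervalIntegral.integral_same] using (hφeig 0 h0m).symm
    exact (mul_eq_zero.mp h).resolve_left hlam'
  -- B and A
  set B : ℝ → ℝ := fun u => ∫ y in (0:ℝ)..1, mk β α cα u y * φc y with hBdef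
  have hBcont : Continuous B := by
    apply intervalIntegral.continuous_parametric_intervalIntegral_of_continuous'
    exact ((mk_continuous hexp)).mul (hφccont.comp continuous_snd)
  set A : ℝ → ℝ := fun x => ∫ u in (0:ℝ)..x, Real.exp (-(β * u)) * B u with hAdef
  have hABcont : Continuous fun u : ℝ => Real.exp (-(β * u)) * B u :=
    (Real.continuous_exp.comp (continuous_const.mul continuous_id).neg).mul hBcont
  have hAderiv : ∀ x : ℝ, HasDerivAt A (Real.exp (-(β * x)) * B x) x := fun x =>
    (hABcont.integral_hasStrictDerivAt 0 x).hasDerivAt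
  -- the key identity lam * φ = exp(βx) * A x on [0,1]
  have hkey : ∀ x ∈ Icc (0:ℝ) 1, lam * φ x = Real.exp (β * x) * A x := by
    intro x hx
    rw [← hφeig x hx]
    have hv : ∀ u y : ℝ,
        (∫ v in (0:ℝ)..y, Real.exp (β*(x-u)) * Real.exp (β*(y-v)) * cα * |u-v| ^ (-α))
          = Real.exp (β*x) * (Real.exp (-(β*u)) * mk β α cα u y) := by
      intro u y
      rw [mk_eq hexp u y, ← intervalIntegral.integral_const_mul,
        ← intervalIntegral.integral_const_mul]
      apply intervalIntegral.integral_congr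
      intro v _
      rw [show β*(x-u) = β*x + -(β*u) by ring, Real.exp_add]
      ring
    have hu : ∀ y : ℝ,
        (∫ u in (0:ℝ)..x, ∫ v in (0:ℝ)..y,
            Real.exp (β*(x-u)) * Real.exp (β*(y-v)) * cα * |u-v| ^ (-α))
          = Real.exp (β*x) * ∫ u in (0:ℝ)..x, Real.exp (-(β*u)) * mk β α cα u y := by
      intro y
      rw [← intervalIntegral.integral_const_mul]
      exact intervalIntegral.integral_congr (fun u _ => hv u y)
    calc (∫ y in (0:ℝ)..1,
          (∫ u in (0:ℝ)..x, ∫ v in (0:ℝ)..y,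
            Real.exp (β*(x-u)) * Real.exp (β*(y-v)) * cα * |u-v| ^ (-α)) * φ y)
        = ∫ y in (0:ℝ)..1, Real.exp (β*x) *
            (∫ u in (0:ℝ)..x, Real.exp (-(β*u)) * mk β α cα u y * φc y) := by
          apply intervalIntegral.integral_congr
          intro y hy
          rw [uIcc_of_le h01] at hy
          dsimp only
          rw [hu y, ← hφceq y hy, intervalIntegral.integral_mul_const]
          ring
      _ = Real.exp (β*x) * ∫ y in (0:ℝ)..1,
            (∫ u in (0:ℝ)..x, Real.exp (-(β*u)) * mk β α cα u y * φc y) := by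
          rw [intervalIntegral.integral_const_mul]
      _ = Real.exp (β*x) * ∫ u in (0:ℝ)..x, ∫ y in (0:ℝ)..1,
            Real.exp (-(β*u)) * mk β α cα u y * φc y := by
          rw [rect_fubini (fun u y => Real.exp (-(β*u)) * mk β α cα u y * φc y) x hx.1]
          show Continuous fun p : ℝ × ℝ =>
            Real.exp (-(β*p.1)) * mk β α cα p.1 p.2 * φc p.2
          exact ((Real.continuous_exp.comp (continuous_const.mul continuous_fst).neg).mul
            (mk_continuous hexp)).mul (hφccont.comp continuous_snd)
      _ = Real.exp (β*x) * A x := by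
          congr 1
          apply intervalIntegral.integral_congr
          intro u _
          simp only [mul_assoc]
          rw [intervalIntegral.integral_const_mul]
  -- Φ, the smooth version of φ
  set Φ : ℝ → ℝ := fun x => lam⁻¹ * (Real.exp (β * x) * A x) with hΦdef
  have hφΦ : ∀ t ∈ Icc (0:ℝ) 1, φ t = Φ t := by
    intro t ht
    have h := hkey t ht
    simp only [hΦdef]
    rw [← h]
    field_simp
  have hEexp : ∀ x : ℝ, HasDerivAt (fun t => Real.exp (β * t)) (β * Real.exp (β * x)) x := by
    intro x
    have := ((hasDerivAt_id x).const_mul β).exp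
    simpa [mul_comm] using this
  have hΦderiv : ∀ x : ℝ, HasDerivAt Φ (β * Φ x + lam⁻¹ * B x) x := by
    intro x
    have h := ((hEexp x).mul (hAderiv x)).const_mul lam⁻¹
    refine h.congr_deriv ?_
    have e1 : Real.exp (β * x) * (Real.exp (-(β * x)) * B x) = B x := by
      rw [← mul_assoc, ← Real.exp_add]
      simp
    rw [e1]
    simp only [hΦdef]
    ring
  have hΦcont : Continuous Φ := by
    refine continuous_iff_continuousAt.mpr fun x => (hΦderiv x).continuousAt
  -- ψ₂, the smooth version of ψ
  set P : ℝ → ℝ := fun t => Real.exp (β * t) * Φ t with hPdef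
  have hPcont : Continuous P :=
    (Real.continuous_exp.comp (continuous_const.mul continuous_id)).mul hΦcont
  set ψ₂ : ℝ → ℝ := fun x => Real.exp (-(β * x)) * ∫ r in x..1, P r with hψ₂def
  have hFcderiv : ∀ x : ℝ, HasDerivAt (fun t => ∫ r in t..1, P r) (-P x) x := by
    intro x
    have h1 : (fun t => ∫ r in t..1, P r)
        = fun t => (∫ r in (0:ℝ)..1, P r) - ∫ r in (0:ℝ)..t, P r := by
      funext t
      rw [eq_sub_iff_add_eq]
      rw [add_comm]
      exact intervalIntegral.integral_add_adjacent_intervals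
        (hPcont.intervalIntegrable _ _) (hPcont.intervalIntegrable _ _)
    rw [h1]
    exact ((hasDerivAt_const x (∫ r in (0:ℝ)..1, P r)).sub
      ((hPcont.integral_hasStrictDerivAt 0 x).hasDerivAt)).congr_deriv (zero_sub _)
  have hEneg : ∀ x : ℝ, HasDerivAt (fun t => Real.exp (-(β * t)))
      (-β * Real.exp (-(β * x))) x := by
    intro x
    have := (((hasDerivAt_id x).const_mul β).neg).exp
    simpa [mul_comm] using this
  have hψ₂deriv : ∀ x : ℝ, HasDerivAt ψ₂ (-β * ψ₂ x - Φ x) x := by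
    intro x
    have h := (hEneg x).mul (hFcderiv x)
    refine h.congr_deriv ?_
    simp only [hψ₂def, hPdef]
    rw [Real.exp_neg]
    field_simp [Real.exp_ne_zero]
    ring
  have hψ₂cont : Continuous ψ₂ :=
    continuous_iff_continuousAt.mpr fun x => (hψ₂deriv x).continuousAt
  have hψψ₂ : EqOn ψ ψ₂ (Icc (0:ℝ) 1) := by
    intro x hx
    rw [hψ x]
    simp only [hψ₂def]
    congr 1
    apply intervalIntegral.integral_congr
    intro r hr
    rw [uIcc_of_le hx.2] at hr
    have hr' : r ∈ Icc (0:ℝ) 1 := ⟨le_trans hx.1 hr.1, hr.2⟩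
    simp only [hPdef]
    rw [hφΦ r hr']
  have hψ₂dd : ∀ x : ℝ, HasDerivAt (fun t => -β * ψ₂ t - Φ t)
      (-β * (-β * ψ₂ x - Φ x) - (β * Φ x + lam⁻¹ * B x)) x := fun x =>
    ((hψ₂deriv x).const_mul (-β)).sub (hΦderiv x)
  -- C² smoothness
  have hd1 : deriv ψ₂ = fun x => -β * ψ₂ x - Φ x := funext fun x => (hψ₂deriv x).deriv
  have hC2 : ContDiff ℝ 2 ψ₂ := by
    rw [show (2 : WithTop ℕ∞) = 1 + 1 by norm_num, contDiff_succ_iff_deriv]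
    refine ⟨fun x => (hψ₂deriv x).differentiableAt, by simp, ?_⟩
    rw [hd1, contDiff_one_iff_deriv]
    constructor
    · exact fun x => ((hψ₂dd x).differentiableAt)
    · have : deriv (fun t => -β * ψ₂ t - Φ t)
          = fun x => -β * (-β * ψ₂ x - Φ x) - (β * Φ x + lam⁻¹ * B x) :=
        funext fun x => (hψ₂dd x).deriv
      rw [this]
      exact ((continuous_const.mul ((continuous_const.mul hψ₂cont).sub hΦcont)).sub
        (((continuous_const.mul hΦcont)).add (continuous_const.mul hBcont)))
  have part1 : ContDiffOn ℝ 2 ψ (Icc (0:ℝ) 1) := hC2.contDiffOn.congr hψψ₂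
  -- iterated derivative
  have hψd1 : ∀ x ∈ Icc (0:ℝ) 1, derivWithin ψ₂ (Icc (0:ℝ) 1) x = -β * ψ₂ x - Φ x :=
    fun x hx => ((hψ₂deriv x).hasDerivWithinAt).derivWithin (hUD x hx)
  have hIter : ∀ x ∈ Icc (0:ℝ) 1,
      iteratedDerivWithin 2 ψ (Icc (0:ℝ) 1) x = β ^ 2 * ψ₂ x - lam⁻¹ * B x := by
    intro x hx
    have e1 : iteratedDerivWithin 2 ψ (Icc (0:ℝ) 1) x
        = iteratedDerivWithin 2 ψ₂ (Icc (0:ℝ) 1) x :=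
      iteratedDerivWithin_congr hψψ₂ hx
    rw [e1, show (2:ℕ) = 1 + 1 from rfl, iteratedDerivWithin_succ]
    have e3 : EqOn (iteratedDerivWithin 1 ψ₂ (Icc (0:ℝ) 1)) (derivWithin ψ₂ (Icc (0:ℝ) 1))
        (Icc (0:ℝ) 1) := fun y hy => congrFun iteratedDerivWithin_one y
    rw [derivWithin_congr e3 (e3 hx), derivWithin_congr hψd1 (hψd1 x hx)]
    rw [((hψ₂dd x).hasDerivWithinAt).derivWithin (hUD x hx)]
    ring
  -- main identity
  have hmain : ∀ x ∈ Icc (0:ℝ) 1,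
      (∫ y in (0:ℝ)..1, cα * |x - y| ^ (-α) * ψ y) =
        lam * (β ^ 2 * ψ x - iteratedDerivWithin 2 ψ (Icc (0:ℝ) 1) x) := by
    intro x hx
    have hRHS : lam * (β ^ 2 * ψ x - iteratedDerivWithin 2 ψ (Icc (0:ℝ) 1) x) = B x := by
      rw [hIter x hx, hψψ₂ hx]
      field_simp
      ring
    rw [hRHS]
    set F : ℝ → ℝ := fun v => cα * |x - v| ^ (-α) * Real.exp (-(β * v)) with hFdef
    set G : ℝ → ℝ := fun r => Real.exp (β * r) * φc r with hGdef
    have hGcont : Continuous G :=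
      (Real.continuous_exp.comp (continuous_const.mul continuous_id)).mul hφccont
    have hFint : IntervalIntegrable F volume 0 1 := by
      have h1 : IntervalIntegrable (fun v : ℝ => |x - v| ^ (-α)) volume 0 1 := by
        have := (abs_rpow_intervalIntegrable hexp x (x - 1)).comp_sub_left x
        simpa using this
      have h2 := (h1.const_mul cα).mul_continuousOn
        (g := fun v => Real.exp (-(β * v)))
        (Real.continuous_exp.comp (continuous_const.mul continuous_id).neg).continuousOn
      exact h2
    have step1 : (∫ y in (0:ℝ)..1, cα * |x - y| ^ (-α) * ψ y)
        = ∫ y in (0:ℝ)..1, F y * ∫ r in y..1, G r := by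
      apply intervalIntegral.integral_congr
      intro y hy
      rw [uIcc_of_le h01] at hy
      dsimp only
      rw [hψ y]
      have hin : (∫ r in y..1, Real.exp (β * r) * φ r) = ∫ r in y..1, G r := by
        apply intervalIntegral.integral_congr
        intro r hr
        rw [uIcc_of_le hy.2] at hr
        simp only [hGdef]
        rw [hφceq r ⟨le_trans hy.1 hr.1, hr.2⟩]
      rw [hin]
      simp only [hFdef]
      ring
    have step2 := triangle_fubini F G hFint hGcont
    have step3 : (∫ r in (0:ℝ)..1, (∫ v in (0:ℝ)..r, F v) * G r) = B x := by
      have hFr : ∀ r : ℝ, (∫ v in (0:ℝ)..r, F v) = Real.exp (-(β * r)) * mk β α cα x r := by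
        intro r
        rw [mk_eq hexp x r, ← intervalIntegral.integral_const_mul]
        apply intervalIntegral.integral_congr
        intro v _
        simp only [hFdef]
        rw [show β * (r - v) = β * r + -(β * v) by ring, Real.exp_add, Real.exp_neg (β * r)]
        field_simp [Real.exp_ne_zero]
      simp only [hBdef]
      apply intervalIntegral.integral_congr
      intro r _
      dsimp only
      rw [hFr r]
      simp only [hGdef]
      rw [Real.exp_neg]
      field_simp [Real.exp_ne_zero]
    rw [step1, step2, step3]
  -- boundary conditions
  have hψ1 : ψ 1 = 0 := by
    rw [hψ 1]
    simp [intervalIntegral.integral_same]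
  have hbd : derivWithin ψ (Icc (0:ℝ) 1) 0 + β * ψ 0 = 0 := by
    have hd0 : derivWithin ψ (Icc (0:ℝ) 1) 0 = -β * ψ₂ 0 - Φ 0 := by
      rw [derivWithin_congr hψψ₂ (hψψ₂ h0m)]
      exact ((hψ₂deriv 0).hasDerivWithinAt).derivWithin (hUD 0 h0m)
    rw [hd0, ← hφΦ 0 h0m, hφ0, ← hψψ₂ h0m]
    ring
  exact ⟨part1, hmain, hψ1, hbd⟩
end

section
/- Let H∈(1/2,1), set α=2−2H∈(0,1) and c_α=(1−α/2)(1−α), let λ>0, and suppose the continuous function φ:[0,1]→ℝ satisfies ∫₀¹ (∫₀ʸ∫₀ˣ (1/2)(u^{2−α}+v^{2−α}−|v−u|^{2−α}) du dv) φ(y) dy = λφ(x) for all x∈[0,1]. Define ψ(x)=∫ₓ¹∫_y¹ φ(u) du dy. Then ψ is four times differentiable on (0,1) and satisfies c_α ∫₀¹ |x−y|^{−α} ψ(y) dy = λ·ψ⁽⁴⁾(x) for all x∈(0,1), together with the boundary conditions ψ(1)=0, ψ'(1)=0, ψ''(0)=0 and ψ⁽³⁾(0)=0. -/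
open MeasureTheory Set
open scoped Real
open scoped Interval

noncomputable def ifbmH (α t : ℝ) : ℝ := t * |t| ^ (-α)

lemma ifbmH_zero (α : ℝ) : ifbmH α 0 = 0 := by simp [ifbmH]

lemma ifbmH_pos {α t : ℝ} (h : 0 < t) : ifbmH α t = t ^ (1 - α) := by
  rw [ifbmH, abs_of_pos h]
  nth_rewrite 1 [← Real.rpow_one t]
  rw [← Real.rpow_add h]
  ring_nf

lemma ifbmH_neg {α t : ℝ} (h : t < 0) : ifbmH α t = -((-t) ^ (1 - α)) := by
  rw [ifbmH, abs_of_neg h]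
  have h' : 0 < -t := by linarith
  nth_rewrite 1 [show t = -(-t) by ring]
  rw [neg_mul]
  congr 1
  nth_rewrite 1 [← Real.rpow_one (-t)]
  rw [← Real.rpow_add h']
  ring_nf

lemma abs_ifbmH_le {α : ℝ} (t : ℝ) : |ifbmH α t| ≤ |t| ^ (1 - α) := by
  rcases eq_or_ne t 0 with rfl | ht
  · simp [ifbmH_zero]
    positivity
  · have h1 : (0:ℝ) < |t| := abs_pos.2 ht
    rw [ifbmH, abs_mul, abs_of_nonneg (Real.rpow_nonneg (abs_nonneg t) _)]
    nth_rewrite 1 [← Real.rpow_one |t|]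
    rw [← Real.rpow_add h1]
    exact le_of_eq (by ring_nf)

lemma ifbmH_cont {α : ℝ} (hα1 : α < 1) : Continuous (ifbmH α) := by
  rw [continuous_iff_continuousAt]
  intro t
  rcases eq_or_ne t 0 with rfl | ht
  · rw [ContinuousAt, ifbmH_zero]
    apply squeeze_zero_norm (abs_ifbmH_le)
    have : ContinuousAt (fun t : ℝ => |t| ^ (1 - α)) 0 := by
      have h1 : ContinuousAt (fun s : ℝ => s ^ (1 - α)) |(0:ℝ)| := by
        simpa using Real.continuousAt_rpow_const 0 (1 - α) (Or.inr (by linarith))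
      exact h1.comp continuous_abs.continuousAt
    simpa [Real.zero_rpow (by linarith : (1:ℝ) - α ≠ 0)] using this.tendsto
  · exact continuousAt_id.mul ((Real.continuousAt_rpow_const |t| (-α)
      (Or.inl (abs_ne_zero.2 ht))).comp continuous_abs.continuousAt)

lemma ifbm_hasDerivAt_rpow_two_sub {α : ℝ} (hα1 : α < 1) (u : ℝ) :
    HasDerivAt (fun u : ℝ => u ^ (2 - α)) ((2 - α) * u ^ (1 - α)) u := by
  have h := Real.hasDerivAt_rpow_const (x := u) (p := 2 - α) (Or.inr (by linarith))
  convert h using 2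
  ring_nf

lemma ifbm_hasDerivAt_rpow_one_sub {α t : ℝ} (ht : t ≠ 0) :
    HasDerivAt (fun t : ℝ => t ^ (1 - α)) ((1 - α) * t ^ (-α)) t := by
  have h := Real.hasDerivAt_rpow_const (x := t) (p := 1 - α) (Or.inl ht)
  convert h using 2
  ring_nf

lemma ifbm_hasDerivAt_abs_rpow {α : ℝ} (hα0 : 0 < α) (hα1 : α < 1) (t : ℝ) :
    HasDerivAt (fun t : ℝ => |t| ^ (2 - α)) ((2 - α) * ifbmH α t) t := by
  rcases lt_trichotomy t 0 with h | rfl | h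
  · have h1 : HasDerivAt (fun s : ℝ => (-s) ^ (2 - α))
        (((2 - α) * (-t) ^ (1 - α)) * (-1)) t :=
      (ifbm_hasDerivAt_rpow_two_sub hα1 (-t)).comp t (hasDerivAt_neg t)
    have heq : (fun s : ℝ => |s| ^ (2 - α)) =ᶠ[nhds t] (fun s => (-s) ^ (2 - α)) := by
      filter_upwards [Iio_mem_nhds h] with s hs
      rw [abs_of_neg hs]
    have h2 := h1.congr_of_eventuallyEq heq
    refine h2.congr_deriv ?_
    rw [ifbmH_neg h]; ring
  · rw [hasDerivAt_iff_tendsto_slope]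
    have hbound : ∀ᶠ s in nhdsWithin 0 {(0:ℝ)}ᶜ,
        ‖slope (fun t : ℝ => |t| ^ (2 - α)) 0 s‖ ≤ |s| ^ (1 - α) := by
      filter_upwards [self_mem_nhdsWithin] with s hs
      have hs0 : s ≠ 0 := hs
      have habs : (0:ℝ) < |s| := abs_pos.2 hs0
      rw [slope_def_field]
      have : ((|s| ^ (2 - α) - |(0:ℝ)| ^ (2 - α)) / (s - 0)) = |s| ^ (2 - α) / s := by
        rw [abs_zero, Real.zero_rpow (by linarith : (2:ℝ) - α ≠ 0)]
        ring
      rw [this]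
      rw [Real.norm_eq_abs, abs_div, abs_of_nonneg (Real.rpow_nonneg (abs_nonneg s) _)]
      rw [show (2:ℝ) - α = (1 - α) + 1 by ring, Real.rpow_add habs, Real.rpow_one]
      exact le_of_eq (mul_div_cancel_right₀ _ (ne_of_gt habs))
    have hlim : Filter.Tendsto (fun s : ℝ => |s| ^ (1 - α))
        (nhdsWithin 0 {(0:ℝ)}ᶜ) (nhds 0) := by
      have h1 : ContinuousAt (fun s : ℝ => s ^ (1 - α)) |(0:ℝ)| := by
        simpa using Real.continuousAt_rpow_const 0 (1 - α) (Or.inr (by linarith))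
      have h2 := (h1.comp continuous_abs.continuousAt).tendsto
      have h3 : Filter.Tendsto (fun s : ℝ => |s| ^ (1 - α)) (nhds 0) (nhds 0) := by
        simpa [Function.comp_def, Real.zero_rpow (by linarith : (1:ℝ) - α ≠ 0)] using h2
      exact h3.mono_left nhdsWithin_le_nhds
    simpa [ifbmH_zero] using squeeze_zero_norm' hbound hlim
  · have h1 : HasDerivAt (fun s : ℝ => s ^ (2 - α)) ((2 - α) * t ^ (1 - α)) t :=
      ifbm_hasDerivAt_rpow_two_sub hα1 t
    have heq : (fun s : ℝ => |s| ^ (2 - α)) =ᶠ[nhds t] (fun s => s ^ (2 - α)) := by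
      filter_upwards [Ioi_mem_nhds h] with s hs
      rw [abs_of_pos hs]
    have h2 := h1.congr_of_eventuallyEq heq
    refine h2.congr_deriv ?_
    rw [ifbmH_pos h]

lemma ifbmH_hasDeriv {α t : ℝ} (ht : t ≠ 0) :
    HasDerivAt (ifbmH α) ((1 - α) * |t| ^ (-α)) t := by
  rcases ht.lt_or_gt with h | h
  · have h' : (0:ℝ) < -t := by linarith
    have h1 : HasDerivAt (fun s : ℝ => -((-s) ^ (1 - α)))
        (-(((1 - α) * (-t) ^ (-α)) * (-1))) t :=
      (((ifbm_hasDerivAt_rpow_one_sub (ne_of_gt h')).comp t (hasDerivAt_neg t))).neg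
    have heq : ifbmH α =ᶠ[nhds t] (fun s : ℝ => -((-s) ^ (1 - α))) := by
      filter_upwards [Iio_mem_nhds h] with s hs
      exact ifbmH_neg hs
    have h2 := h1.congr_of_eventuallyEq heq
    refine h2.congr_deriv ?_
    rw [abs_of_neg h]; ring
  · have h1 : HasDerivAt (fun s : ℝ => s ^ (1 - α)) ((1 - α) * t ^ (-α)) t :=
      ifbm_hasDerivAt_rpow_one_sub (ne_of_gt h)
    have heq : ifbmH α =ᶠ[nhds t] (fun s : ℝ => s ^ (1 - α)) := by
      filter_upwards [Ioi_mem_nhds h] with s hs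
      exact ifbmH_pos hs
    have h2 := h1.congr_of_eventuallyEq heq
    refine h2.congr_deriv ?_
    rw [abs_of_pos h]

noncomputable def ifbmk (α u v : ℝ) : ℝ :=
  (1 / 2) * (u ^ (2 - α) + v ^ (2 - α) - |v - u| ^ (2 - α))

noncomputable def ifbmk1 (α u v : ℝ) : ℝ :=
  (1 - α / 2) * (u ^ (1 - α) - ifbmH α (u - v))

lemma ifbmk_hasDeriv {α : ℝ} (hα0 : 0 < α) (hα1 : α < 1) (u v : ℝ) :
    HasDerivAt (fun u => ifbmk α u v) (ifbmk1 α u v) u := by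
  have h1 := ifbm_hasDerivAt_rpow_two_sub hα1 u
  have h2 : HasDerivAt (fun u : ℝ => |v - u| ^ (2 - α)) ((2 - α) * ifbmH α (u - v)) u := by
    have h3 := (ifbm_hasDerivAt_abs_rpow hα0 hα1 (u - v)).comp u
      ((hasDerivAt_id u).sub_const v)
    have heq : (fun u : ℝ => |v - u| ^ (2 - α)) = (fun u : ℝ => |u - v| ^ (2 - α)) := by
      funext s; rw [abs_sub_comm]
    rw [heq]
    simpa [Function.comp_def] using h3
  have h4 := ((h1.add_const (v ^ (2 - α))).sub h2).const_mul (1 / 2 : ℝ)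
  refine h4.congr_deriv ?_
  unfold ifbmk1
  ring

lemma ifbmk1_hasDeriv_snd {α : ℝ} {u v : ℝ} (hne : u - v ≠ 0) :
    HasDerivAt (fun v => ifbmk1 α u v) ((1 - α / 2) * (1 - α) * |u - v| ^ (-α)) v := by
  have h1 : HasDerivAt (fun v : ℝ => ifbmH α (u - v))
      (((1 - α) * |u - v| ^ (-α)) * (-1)) v :=
    (ifbmH_hasDeriv hne).comp v ((hasDerivAt_id v).const_sub u)
  have h2 := ((hasDerivAt_const v (u ^ (1 - α))).sub h1).const_mul (1 - α / 2 : ℝ)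
  refine h2.congr_deriv ?_
  ring

lemma ifbm_rpow_cont {q : ℝ} (hq : 0 < q) : Continuous (fun t : ℝ => t ^ q) :=
  continuous_iff_continuousAt.2 fun t => Real.continuousAt_rpow_const t q (Or.inr hq.le)

lemma ifbmk_cont {α : ℝ} (hα1 : α < 1) :
    Continuous (fun p : ℝ × ℝ => ifbmk α p.1 p.2) := by
  have hq : Continuous (fun t : ℝ => t ^ (2 - α)) := ifbm_rpow_cont (by linarith)
  exact continuous_const.mul (((hq.comp continuous_fst).add (hq.comp continuous_snd)).sub
    (hq.comp ((continuous_snd.sub continuous_fst).abs)))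

lemma ifbmk1_cont {α : ℝ} (hα0 : 0 < α) (hα1 : α < 1) :
    Continuous (fun p : ℝ × ℝ => ifbmk1 α p.1 p.2) := by
  have hq : Continuous (fun t : ℝ => t ^ (1 - α)) := ifbm_rpow_cont (by linarith)
  exact continuous_const.mul ((hq.comp continuous_fst).sub
    ((ifbmH_cont hα1).comp (continuous_fst.sub continuous_snd)))

lemma ifbm_abs_sub' (a b : ℝ) : |a - b| ≤ |a| + |b| := by
  rw [sub_eq_add_neg]
  exact (abs_add_le a (-b)).trans_eq (by rw [abs_neg])

lemma ifbm_abs3 (a b c : ℝ) : |a + b - c| ≤ |a| + |b| + |c| := by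
  refine (ifbm_abs_sub' (a + b) c).trans ?_
  have := abs_add_le a b
  linarith

lemma ifbm_rpow_bound {q t M : ℝ} (hq0 : 0 ≤ q) (hq2 : q ≤ 2) (ht : |t| ≤ M) :
    |t ^ q| ≤ (max 1 M) ^ (2:ℝ) := by
  have hM1 : (1:ℝ) ≤ max 1 M := le_max_left _ _
  calc |t ^ q| ≤ |t| ^ q := Real.abs_rpow_le_abs_rpow t q
    _ ≤ (max 1 M) ^ q :=
      Real.rpow_le_rpow (abs_nonneg t) (ht.trans (le_max_right 1 M)) hq0
    _ ≤ (max 1 M) ^ (2:ℝ) := Real.rpow_le_rpow_of_exponent_le hM1 hq2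

lemma ifbm_H_bound {α t M : ℝ} (hα0 : 0 < α) (hα1 : α < 1) (ht : |t| ≤ M) :
    |ifbmH α t| ≤ (max 1 M) ^ (2:ℝ) := by
  refine (abs_ifbmH_le t).trans ?_
  have h2 : |t| ^ (1 - α) = abs (|t| ^ (1 - α)) :=
    (abs_of_nonneg (Real.rpow_nonneg (abs_nonneg t) _)).symm
  rw [h2]
  exact ifbm_rpow_bound (by linarith) (by linarith) (by rwa [abs_abs])

lemma ifbmk_bound {α u v M : ℝ} (hα0 : 0 < α) (hα1 : α < 1)
    (hu : |u| ≤ M) (hv : |v| ≤ M) : |ifbmk α u v| ≤ 2 * (max 1 (2 * M)) ^ (2:ℝ) := by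
  have hM : 0 ≤ M := (abs_nonneg u).trans hu
  have hB : (0:ℝ) ≤ (max 1 (2 * M)) ^ (2:ℝ) :=
    Real.rpow_nonneg (le_trans zero_le_one (le_max_left _ _)) _
  have h1 : |u ^ (2 - α)| ≤ (max 1 (2 * M)) ^ (2:ℝ) :=
    ifbm_rpow_bound (by linarith) (by linarith) (hu.trans (by linarith))
  have h2 : |v ^ (2 - α)| ≤ (max 1 (2 * M)) ^ (2:ℝ) :=
    ifbm_rpow_bound (by linarith) (by linarith) (hv.trans (by linarith))
  have h3 : |(|v - u|) ^ (2 - α)| ≤ (max 1 (2 * M)) ^ (2:ℝ) := by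
    refine ifbm_rpow_bound (by linarith) (by linarith) ?_
    rw [abs_abs]
    calc |v - u| ≤ |v| + |u| := ifbm_abs_sub' _ _
      _ ≤ 2 * M := by linarith
  calc |ifbmk α u v| ≤ (1/2) * (|u ^ (2-α)| + |v ^ (2-α)| + |(|v - u|) ^ (2-α)|) := by
        rw [ifbmk, abs_mul, abs_of_nonneg (by norm_num : (0:ℝ) ≤ 1/2)]
        have h5 := ifbm_abs3 (u ^ (2-α)) (v ^ (2-α)) ((|v - u|) ^ (2-α))
        linarith
    _ ≤ 2 * (max 1 (2 * M)) ^ (2:ℝ) := by linarith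

lemma ifbmk1_bound {α u v M : ℝ} (hα0 : 0 < α) (hα1 : α < 1)
    (hu : |u| ≤ M) (hv : |v| ≤ M) : |ifbmk1 α u v| ≤ 2 * (max 1 (2 * M)) ^ (2:ℝ) := by
  have hM : 0 ≤ M := (abs_nonneg u).trans hu
  have hB : (0:ℝ) ≤ (max 1 (2 * M)) ^ (2:ℝ) :=
    Real.rpow_nonneg (le_trans zero_le_one (le_max_left _ _)) _
  have h1 : |u ^ (1 - α)| ≤ (max 1 (2 * M)) ^ (2:ℝ) :=
    ifbm_rpow_bound (by linarith) (by linarith) (hu.trans (by linarith))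
  have h2 : |ifbmH α (u - v)| ≤ (max 1 (2 * M)) ^ (2:ℝ) := by
    refine ifbm_H_bound hα0 hα1 ?_
    calc |u - v| ≤ |u| + |v| := ifbm_abs_sub' _ _
      _ ≤ 2 * M := by linarith
  have h3 : |1 - α / 2| ≤ 1 := by rw [abs_of_nonneg (by linarith)]; linarith
  calc |ifbmk1 α u v| = |1 - α/2| * |u ^ (1-α) - ifbmH α (u - v)| := by
        rw [ifbmk1, abs_mul]
    _ ≤ 1 * (|u ^ (1-α)| + |ifbmH α (u - v)|) :=
        mul_le_mul h3 (ifbm_abs_sub' _ _) (abs_nonneg _) zero_le_one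
    _ ≤ 2 * (max 1 (2 * M)) ^ (2:ℝ) := by linarith

lemma ifbm_absInt {α : ℝ} (hα0 : 0 < α) (hα1 : α < 1) (c d : ℝ) :
    IntervalIntegrable (fun t : ℝ => |t| ^ (-α)) volume c d := by
  have key : ∀ d : ℝ, 0 ≤ d → IntervalIntegrable (fun t : ℝ => |t| ^ (-α)) volume 0 d := by
    intro d hd
    have h1 : IntervalIntegrable (fun t : ℝ => t ^ (-α)) volume 0 d :=
      intervalIntegral.intervalIntegrable_rpow' (by linarith)
    refine h1.congr_ae ?_
    rw [Filter.eventuallyEq_iff_exists_mem]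
    refine ⟨Ι (0:ℝ) d, self_mem_ae_restrict measurableSet_uIoc, fun t ht => ?_⟩
    rw [uIoc_of_le hd] at ht
    show t ^ (-α) = |t| ^ (-α)
    rw [abs_of_pos ht.1]
  have keyneg : ∀ c : ℝ, c ≤ 0 → IntervalIntegrable (fun t : ℝ => |t| ^ (-α)) volume c 0 := by
    intro c hc
    have h1 := (key (-c) (by linarith)).comp_sub_left 0
    have h2 : (fun x : ℝ => |0 - x| ^ (-α)) = fun t : ℝ => |t| ^ (-α) := by
      funext t; rw [zero_sub, abs_neg]
    simp only [sub_zero, zero_sub, neg_neg] at h1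
    rw [show (fun x : ℝ => |-x| ^ (-α)) = fun t : ℝ => |t| ^ (-α) by
      funext t; rw [abs_neg] ] at h1
    exact h1.symm
  -- general case
  have main : ∀ c d : ℝ, c ≤ d → IntervalIntegrable (fun t : ℝ => |t| ^ (-α)) volume c d := by
    intro c d hcd
    rcases le_total 0 c with h0c | hc0
    · exact (key d (le_trans h0c hcd)).mono_set
        (by rw [uIcc_of_le hcd, uIcc_of_le (le_trans h0c hcd)]; exact Icc_subset_Icc h0c le_rfl)
    · rcases le_total d 0 with hd0 | h0d
      · exact (keyneg c (le_trans hcd hd0)).mono_set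
          (by rw [uIcc_of_le hcd, uIcc_of_le (le_trans hcd hd0)]; exact Icc_subset_Icc le_rfl hd0)
      · exact (keyneg c hc0).trans (key d h0d)
  rcases le_total c d with h | h
  · exact main c d h
  · exact (main d c h).symm

lemma ifbm_absInt' {α : ℝ} (hα0 : 0 < α) (hα1 : α < 1) (x c d : ℝ) :
    IntervalIntegrable (fun y : ℝ => |x - y| ^ (-α)) volume c d := by
  have := (ifbm_absInt hα0 hα1 (x - c) (x - d)).comp_sub_left x
  simpa using this

noncomputable def ifbmK2 (α x y : ℝ) : ℝ := ∫ v in (0:ℝ)..y, ifbmk α x v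
noncomputable def ifbmL (α x y : ℝ) : ℝ := ∫ v in (0:ℝ)..y, ifbmk1 α x v
noncomputable def ifbmF2 (α x y : ℝ) : ℝ :=
  ∫ v in (0:ℝ)..y, ∫ u in (0:ℝ)..x, ifbmk α u v
noncomputable def ifbmI (α : ℝ) (f : ℝ → ℝ) (x : ℝ) : ℝ :=
  ∫ y in (0:ℝ)..1, ifbmF2 α x y * f y
noncomputable def ifbmG (α : ℝ) (f : ℝ → ℝ) (x : ℝ) : ℝ :=
  ∫ y in (0:ℝ)..1, ifbmK2 α x y * f y
noncomputable def ifbmD (α : ℝ) (f : ℝ → ℝ) (x : ℝ) : ℝ :=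
  ∫ y in (0:ℝ)..1, ifbmL α x y * f y

lemma ifbmK2_cont {α : ℝ} (hα1 : α < 1) :
    Continuous (fun p : ℝ × ℝ => ifbmK2 α p.1 p.2) :=
  intervalIntegral.continuous_parametric_primitive_of_continuous (ifbmk_cont hα1)

lemma ifbmL_cont {α : ℝ} (hα0 : 0 < α) (hα1 : α < 1) :
    Continuous (fun p : ℝ × ℝ => ifbmL α p.1 p.2) :=
  intervalIntegral.continuous_parametric_primitive_of_continuous (ifbmk1_cont hα0 hα1)

lemma ifbm_abs_ball {x₀ x : ℝ} (hx : x ∈ Metric.ball x₀ 1) : |x| ≤ |x₀| + 2 := by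
  have h1 : |x - x₀| < 1 := by simpa [Real.dist_eq] using hx
  calc |x| = |x₀ + (x - x₀)| := by ring_nf
    _ ≤ |x₀| + |x - x₀| := abs_add_le _ _
    _ ≤ |x₀| + 2 := by linarith

lemma ifbm_mem_uIoc_Icc {y v : ℝ} (hy : y ∈ Set.Icc (0:ℝ) 1) (hv : v ∈ Ι (0:ℝ) y) :
    |v| ≤ 1 := by
  rw [uIoc_of_le hy.1] at hv
  rw [abs_of_pos hv.1]
  exact hv.2.trans hy.2

lemma ifbm_slice_cont_fst {α : ℝ} (hα1 : α < 1) (v : ℝ) :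
    Continuous (fun u => ifbmk α u v) :=
  (ifbmk_cont hα1).comp (continuous_id.prodMk continuous_const)

lemma ifbm_slice_cont_snd {α : ℝ} (hα1 : α < 1) (u : ℝ) :
    Continuous (fun v => ifbmk α u v) :=
  (ifbmk_cont hα1).comp (continuous_const.prodMk continuous_id)

lemma ifbm_slice1_cont_snd {α : ℝ} (hα0 : 0 < α) (hα1 : α < 1) (u : ℝ) :
    Continuous (fun v => ifbmk1 α u v) :=
  (ifbmk1_cont hα0 hα1).comp (continuous_const.prodMk continuous_id)

lemma ifbm_inner_cont {α : ℝ} (hα1 : α < 1) (x : ℝ) :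
    Continuous (fun v => ∫ u in (0:ℝ)..x, ifbmk α u v) := by
  have hunc : Continuous (Function.uncurry fun (v u : ℝ) => ifbmk α u v) := by
    have he : (Function.uncurry fun (v u : ℝ) => ifbmk α u v)
        = fun p : ℝ × ℝ => ifbmk α p.2 p.1 := rfl
    rw [he]
    exact (ifbmk_cont hα1).comp (continuous_snd.prodMk continuous_fst)
  exact intervalIntegral.continuous_parametric_intervalIntegral_of_continuous' hunc 0 x

lemma ifbm_inner_hasDeriv {α : ℝ} (hα1 : α < 1) (v x : ℝ) :
    HasDerivAt (fun x => ∫ u in (0:ℝ)..x, ifbmk α u v) (ifbmk α x v) x := by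
  have hc := ifbm_slice_cont_fst hα1 v
  exact intervalIntegral.integral_hasDerivAt_right (hc.intervalIntegrable _ _)
    (hc.stronglyMeasurableAtFilter _ _) hc.continuousAt

lemma ifbmF2_hasDeriv {α : ℝ} (hα0 : 0 < α) (hα1 : α < 1) {y : ℝ}
    (hy : y ∈ Set.Icc (0:ℝ) 1) (x₀ : ℝ) :
    HasDerivAt (fun x => ifbmF2 α x y) (ifbmK2 α x₀ y) x₀ := by
  have h := intervalIntegral.hasDerivAt_integral_of_dominated_loc_of_deriv_le
    (F := fun x v => ∫ u in (0:ℝ)..x, ifbmk α u v) (F' := fun x v => ifbmk α x v)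
    (x₀ := x₀) (a := 0) (b := y) (μ := volume)
    (bound := fun _ => 2 * (max 1 (2 * (|x₀| + 2))) ^ (2:ℝ))
    (Metric.ball_mem_nhds x₀ one_pos)
    (Filter.Eventually.of_forall fun x => (ifbm_inner_cont hα1 x).aestronglyMeasurable)
    ((ifbm_inner_cont hα1 x₀).intervalIntegrable _ _)
    (ifbm_slice_cont_snd hα1 x₀).aestronglyMeasurable
    (Filter.Eventually.of_forall fun v hv x hx => by
      rw [Real.norm_eq_abs]
      exact ifbmk_bound hα0 hα1 (ifbm_abs_ball hx) ((ifbm_mem_uIoc_Icc hy hv).trans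
        (by linarith [abs_nonneg x₀])))
    intervalIntegrable_const
    (Filter.Eventually.of_forall fun v _ x _ => ifbm_inner_hasDeriv hα1 v x)
  exact h.2

lemma ifbmK2_hasDeriv {α : ℝ} (hα0 : 0 < α) (hα1 : α < 1) {y : ℝ}
    (hy : y ∈ Set.Icc (0:ℝ) 1) (x₀ : ℝ) :
    HasDerivAt (fun x => ifbmK2 α x y) (ifbmL α x₀ y) x₀ := by
  have h := intervalIntegral.hasDerivAt_integral_of_dominated_loc_of_deriv_le
    (F := fun x v => ifbmk α x v) (F' := fun x v => ifbmk1 α x v)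
    (x₀ := x₀) (a := 0) (b := y) (μ := volume)
    (bound := fun _ => 2 * (max 1 (2 * (|x₀| + 2))) ^ (2:ℝ))
    (Metric.ball_mem_nhds x₀ one_pos)
    (Filter.Eventually.of_forall fun x => (ifbm_slice_cont_snd hα1 x).aestronglyMeasurable)
    ((ifbm_slice_cont_snd hα1 x₀).intervalIntegrable _ _)
    (ifbm_slice1_cont_snd hα0 hα1 x₀).aestronglyMeasurable
    (Filter.Eventually.of_forall fun v hv x hx => by
      rw [Real.norm_eq_abs]
      exact ifbmk1_bound hα0 hα1 (ifbm_abs_ball hx) ((ifbm_mem_uIoc_Icc hy hv).trans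
        (by linarith [abs_nonneg x₀])))
    intervalIntegrable_const
    (Filter.Eventually.of_forall fun v _ x _ => ifbmk_hasDeriv hα0 hα1 x v)
  exact h.2

lemma ifbmK2_bound {α : ℝ} (hα0 : 0 < α) (hα1 : α < 1) {x y M : ℝ} (hM1 : 1 ≤ M)
    (hx : |x| ≤ M) (hy : y ∈ Set.Icc (0:ℝ) 1) :
    |ifbmK2 α x y| ≤ 2 * (max 1 (2 * M)) ^ (2:ℝ) := by
  have hM : 0 ≤ M := (abs_nonneg x).trans hx
  have h := intervalIntegral.norm_integral_le_of_norm_le_const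
    (C := 2 * (max 1 (2 * M)) ^ (2:ℝ)) (f := fun v => ifbmk α x v) (a := 0) (b := y)
    (fun v hv => by
      rw [Real.norm_eq_abs]
      exact ifbmk_bound hα0 hα1 hx ((ifbm_mem_uIoc_Icc hy hv).trans (by linarith)))
  rw [Real.norm_eq_abs] at h
  refine h.trans ?_
  have hB : (0:ℝ) ≤ 2 * (max 1 (2 * M)) ^ (2:ℝ) := by
    have := Real.rpow_nonneg (le_trans zero_le_one (le_max_left 1 (2*M))) (2:ℝ)
    linarith
  have : |y - 0| ≤ 1 := by rw [sub_zero, abs_of_nonneg hy.1]; exact hy.2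
  exact mul_le_of_le_one_right hB this

lemma ifbmL_bound {α : ℝ} (hα0 : 0 < α) (hα1 : α < 1) {x y M : ℝ} (hM1 : 1 ≤ M)
    (hx : |x| ≤ M) (hy : y ∈ Set.Icc (0:ℝ) 1) :
    |ifbmL α x y| ≤ 2 * (max 1 (2 * M)) ^ (2:ℝ) := by
  have hM : 0 ≤ M := (abs_nonneg x).trans hx
  have h := intervalIntegral.norm_integral_le_of_norm_le_const
    (C := 2 * (max 1 (2 * M)) ^ (2:ℝ)) (f := fun v => ifbmk1 α x v) (a := 0) (b := y)
    (fun v hv => by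
      rw [Real.norm_eq_abs]
      exact ifbmk1_bound hα0 hα1 hx ((ifbm_mem_uIoc_Icc hy hv).trans (by linarith)))
  rw [Real.norm_eq_abs] at h
  refine h.trans ?_
  have hB : (0:ℝ) ≤ 2 * (max 1 (2 * M)) ^ (2:ℝ) := by
    have := Real.rpow_nonneg (le_trans zero_le_one (le_max_left 1 (2*M))) (2:ℝ)
    linarith
  have : |y - 0| ≤ 1 := by rw [sub_zero, abs_of_nonneg hy.1]; exact hy.2
  exact mul_le_of_le_one_right hB this

lemma ifbm_uIoc_mem {y : ℝ} (hy : y ∈ Ι (0:ℝ) 1) : y ∈ Set.Icc (0:ℝ) 1 :=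
  Ioc_subset_Icc_self (by rwa [uIoc_of_le zero_le_one] at hy)

lemma ifbmF2_cont_snd {α : ℝ} (hα1 : α < 1) (x : ℝ) :
    Continuous (fun y => ifbmF2 α x y) :=
  intervalIntegral.continuous_primitive
    (fun a b => (ifbm_inner_cont hα1 x).intervalIntegrable a b) 0

lemma ifbmK2_cont_snd {α : ℝ} (hα1 : α < 1) (x : ℝ) :
    Continuous (fun y => ifbmK2 α x y) :=
  intervalIntegral.continuous_primitive
    (fun a b => (ifbm_slice_cont_snd hα1 x).intervalIntegrable a b) 0

lemma ifbmL_cont_snd {α : ℝ} (hα0 : 0 < α) (hα1 : α < 1) (x : ℝ) :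
    Continuous (fun y => ifbmL α x y) :=
  intervalIntegral.continuous_primitive
    (fun a b => (ifbm_slice1_cont_snd hα0 hα1 x).intervalIntegrable a b) 0

lemma ifbm_ball_bound {x₀ x : ℝ} (hx : x ∈ Metric.ball x₀ 1) : |x| ≤ |x₀| + 2 :=
  ifbm_abs_ball hx

lemma ifbmI_hasDeriv {α : ℝ} (hα0 : 0 < α) (hα1 : α < 1) {f : ℝ → ℝ} {C : ℝ}
    (hf : Continuous f) (hC : ∀ y, |f y| ≤ C) (x₀ : ℝ) :
    HasDerivAt (ifbmI α f) (ifbmG α f x₀) x₀ := by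
  have hC0 : 0 ≤ C := (abs_nonneg (f 0)).trans (hC 0)
  have hM1 : (1:ℝ) ≤ |x₀| + 2 := by linarith [abs_nonneg x₀]
  have h := intervalIntegral.hasDerivAt_integral_of_dominated_loc_of_deriv_le
    (F := fun x y => ifbmF2 α x y * f y) (F' := fun x y => ifbmK2 α x y * f y)
    (x₀ := x₀) (a := 0) (b := 1) (μ := volume)
    (bound := fun _ => (2 * (max 1 (2 * (|x₀| + 2))) ^ (2:ℝ)) * C)
    (Metric.ball_mem_nhds x₀ one_pos)
    (Filter.Eventually.of_forall fun x =>
      ((ifbmF2_cont_snd hα1 x).mul hf).aestronglyMeasurable)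
    (((ifbmF2_cont_snd hα1 x₀).mul hf).intervalIntegrable _ _)
    ((ifbmK2_cont_snd hα1 x₀).mul hf).aestronglyMeasurable
    (Filter.Eventually.of_forall fun y hy x hx => by
      rw [Real.norm_eq_abs, abs_mul]
      exact mul_le_mul (ifbmK2_bound hα0 hα1 hM1 (ifbm_abs_ball hx) (ifbm_uIoc_mem hy))
        (hC y) (abs_nonneg _) (by positivity))
    intervalIntegrable_const
    (Filter.Eventually.of_forall fun y hy x _ =>
      (ifbmF2_hasDeriv hα0 hα1 (ifbm_uIoc_mem hy) x).mul_const (f y))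
  exact h.2

lemma ifbmG_hasDeriv {α : ℝ} (hα0 : 0 < α) (hα1 : α < 1) {f : ℝ → ℝ} {C : ℝ}
    (hf : Continuous f) (hC : ∀ y, |f y| ≤ C) (x₀ : ℝ) :
    HasDerivAt (ifbmG α f) (ifbmD α f x₀) x₀ := by
  have hC0 : 0 ≤ C := (abs_nonneg (f 0)).trans (hC 0)
  have hM1 : (1:ℝ) ≤ |x₀| + 2 := by linarith [abs_nonneg x₀]
  have h := intervalIntegral.hasDerivAt_integral_of_dominated_loc_of_deriv_le
    (F := fun x y => ifbmK2 α x y * f y) (F' := fun x y => ifbmL α x y * f y)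
    (x₀ := x₀) (a := 0) (b := 1) (μ := volume)
    (bound := fun _ => (2 * (max 1 (2 * (|x₀| + 2))) ^ (2:ℝ)) * C)
    (Metric.ball_mem_nhds x₀ one_pos)
    (Filter.Eventually.of_forall fun x =>
      ((ifbmK2_cont_snd hα1 x).mul hf).aestronglyMeasurable)
    (((ifbmK2_cont_snd hα1 x₀).mul hf).intervalIntegrable _ _)
    ((ifbmL_cont_snd hα0 hα1 x₀).mul hf).aestronglyMeasurable
    (Filter.Eventually.of_forall fun y hy x hx => by
      rw [Real.norm_eq_abs, abs_mul]
      exact mul_le_mul (ifbmL_bound hα0 hα1 hM1 (ifbm_abs_ball hx) (ifbm_uIoc_mem hy))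
        (hC y) (abs_nonneg _) (by positivity))
    intervalIntegrable_const
    (Filter.Eventually.of_forall fun y hy x _ =>
      (ifbmK2_hasDeriv hα0 hα1 (ifbm_uIoc_mem hy) x).mul_const (f y))
  exact h.2

lemma ifbmD_cont {α : ℝ} (hα0 : 0 < α) (hα1 : α < 1) {f : ℝ → ℝ} (hf : Continuous f) :
    Continuous (ifbmD α f) := by
  have hunc : Continuous (Function.uncurry fun (x y : ℝ) => ifbmL α x y * f y) := by
    have he : (Function.uncurry fun (x y : ℝ) => ifbmL α x y * f y)
        = fun p : ℝ × ℝ => ifbmL α p.1 p.2 * f p.2 := rfl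
    rw [he]
    exact (ifbmL_cont hα0 hα1).mul (hf.comp continuous_snd)
  exact intervalIntegral.continuous_parametric_intervalIntegral_of_continuous' hunc 0 1

/-- **Reduction of the integrated fractional Brownian motion eigenproblem
(`H > 1/2`, i.e. `α ∈ (0,1)`) to a generalized eigenproblem.** If `φ` solves
`∫₀¹ (∫₀ʸ∫₀ˣ ½(u^{2-α}+v^{2-α}-|v-u|^{2-α}) du dv) φ(y) dy = λ φ(x)` on `[0,1]`,
then `ψ(x) = ∫ₓ¹∫_y¹ φ(u) du dy` is four times differentiable on `(0,1)`,
satisfies `c_α ∫₀¹ |x-y|^{-α} ψ(y) dy = λ ψ⁗(x)` there, and obeys the boundary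
conditions `ψ(1) = 0`, `ψ'(1) = 0`, `ψ''(0) = 0`, `ψ'''(0) = 0`. -/
theorem ifbm_generalized_eigenproblem_large_H
    (H : ℝ) (hH : H ∈ Set.Ioo (1 / 2 : ℝ) 1)
    (α : ℝ) (hα : α = 2 - 2 * H)
    (cα : ℝ) (hcα : cα = (1 - α / 2) * (1 - α))
    (lam : ℝ) (hlam : 0 < lam)
    (φ : ℝ → ℝ) (hφcont : ContinuousOn φ (Set.Icc 0 1))
    (hφeig : ∀ x ∈ Set.Icc (0 : ℝ) 1,
      ∫ y in (0 : ℝ)..1,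
        (∫ v in (0 : ℝ)..y, ∫ u in (0 : ℝ)..x,
          (1 / 2) * (u ^ (2 - α) + v ^ (2 - α) - |v - u| ^ (2 - α))) *
        φ y = lam * φ x)
    (ψ : ℝ → ℝ)
    (hψ : ∀ x, ψ x = ∫ y in x..1, ∫ u in y..1, φ u) :
    ContDiffOn ℝ 4 ψ (Set.Ioo 0 1) ∧
    (∀ x ∈ Set.Ioo (0 : ℝ) 1,
      cα * ∫ y in (0 : ℝ)..1, |x - y| ^ (-α) * ψ y =
        lam * iteratedDerivWithin 4 ψ (Set.Ioo 0 1) x) ∧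
    ψ 1 = 0 ∧
    derivWithin ψ (Set.Icc 0 1) 1 = 0 ∧
    iteratedDerivWithin 2 ψ (Set.Icc 0 1) 0 = 0 ∧
    iteratedDerivWithin 3 ψ (Set.Icc 0 1) 0 = 0 := by
  obtain ⟨hH1, hH2⟩ := hH
  have hα0 : 0 < α := by rw [hα]; linarith
  have hα1 : α < 1 := by rw [hα]; linarith
  have hlam' : lam ≠ 0 := ne_of_gt hlam
  have h01 : (0:ℝ) ≤ 1 := zero_le_one
  have hclamp : ∀ x : ℝ, max 0 (min 1 x) ∈ Set.Icc (0:ℝ) 1 := fun x =>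
    ⟨le_max_left _ _, max_le zero_le_one (min_le_left _ _)⟩
  set φc : ℝ → ℝ := fun x => φ (max 0 (min 1 x)) with hφcdef
  have hφcC : Continuous φc :=
    hφcont.comp_continuous (continuous_const.max (continuous_const.min continuous_id)) hclamp
  have hφceq : ∀ x ∈ Set.Icc (0:ℝ) 1, φc x = φ x := by
    intro x hx
    simp only [hφcdef, min_eq_right hx.2, max_eq_right hx.1]
  obtain ⟨C, hCb⟩ : ∃ C, ∀ x, |φc x| ≤ C := by
    obtain ⟨C, hC⟩ := isCompact_Icc.exists_bound_of_continuousOn hφcont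
    exact ⟨C, fun x => by simpa [Real.norm_eq_abs] using hC _ (hclamp x)⟩
  -- the eigen-identity in terms of `ifbmI`
  have hI : ∀ x ∈ Set.Icc (0:ℝ) 1, ifbmI α φc x = lam * φ x := by
    intro x hx
    rw [← hφeig x hx]
    apply intervalIntegral.integral_congr
    intro y hy
    rw [uIcc_of_le h01] at hy
    show ifbmF2 α x y * φc y = _
    rw [hφceq y hy]
    rfl
  have hφ0 : φ 0 = 0 := by
    have h0 := hφeig 0 ⟨le_rfl, h01⟩
    simp only [intervalIntegral.integral_same, intervalIntegral.integral_zero, zero_mul] at h0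
    rcases mul_eq_zero.mp h0.symm with h | h
    · exact absurd h hlam'
    · exact h
  have hGd : ∀ x, HasDerivAt (ifbmI α φc) (ifbmG α φc x) x :=
    fun x => ifbmI_hasDeriv hα0 hα1 hφcC hCb x
  have hDd : ∀ x, HasDerivAt (ifbmG α φc) (ifbmD α φc x) x :=
    fun x => ifbmG_hasDeriv hα0 hα1 hφcC hCb x
  have hDcont : Continuous (ifbmD α φc) := ifbmD_cont hα0 hα1 hφcC
  have hG0 : ifbmG α φc 0 = 0 := by
    have hz : ∀ y ∈ Set.uIcc (0:ℝ) 1, ifbmK2 α 0 y * φc y = (fun _ : ℝ => (0:ℝ)) y := by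
      intro y hy
      rw [uIcc_of_le h01] at hy
      have hk0 : ∀ v ∈ Set.uIcc (0:ℝ) y, ifbmk α 0 v = (fun _ : ℝ => (0:ℝ)) v := by
        intro v hv
        rw [uIcc_of_le hy.1] at hv
        unfold ifbmk
        rw [Real.zero_rpow (by linarith : (2:ℝ) - α ≠ 0), sub_zero, abs_of_nonneg hv.1]
        ring
      have h2 : ifbmK2 α 0 y = ∫ v in (0:ℝ)..y, (0:ℝ) :=
        intervalIntegral.integral_congr hk0
      simp only [h2, intervalIntegral.integral_zero, zero_mul]
    unfold ifbmG
    rw [intervalIntegral.integral_congr hz]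
    simp
  -- primitives
  set gg : ℝ → ℝ := fun y => ∫ u in y..1, φc u with hggdef
  have hggd : ∀ y, HasDerivAt gg (-(φc y)) y := by
    intro y
    have h1 : HasDerivAt (fun z => ∫ u in (1:ℝ)..z, φc u) (φc y) y :=
      intervalIntegral.integral_hasDerivAt_right (hφcC.intervalIntegrable _ _)
        (hφcC.stronglyMeasurableAtFilter _ _) hφcC.continuousAt
    have h2 : HasDerivAt (fun z => -∫ u in (1:ℝ)..z, φc u) (-(φc y)) y := h1.neg
    have h3 : (fun z => -∫ u in (1:ℝ)..z, φc u) = gg := by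
      funext z
      rw [hggdef]
      exact (intervalIntegral.integral_symm 1 z).symm
    rwa [h3] at h2
  have hggdiff : Differentiable ℝ gg := fun y => (hggd y).differentiableAt
  have hggc : Continuous gg := hggdiff.continuous
  have hgg1 : gg 1 = 0 := intervalIntegral.integral_same
  set ψcf : ℝ → ℝ := fun x => ∫ y in x..1, gg y with hψcdef
  have hψcd : ∀ x, HasDerivAt ψcf (-(gg x)) x := by
    intro x
    have h1 : HasDerivAt (fun z => ∫ y in (1:ℝ)..z, gg y) (gg x) x :=
      intervalIntegral.integral_hasDerivAt_right (hggc.intervalIntegrable _ _)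
        (hggc.stronglyMeasurableAtFilter _ _) hggc.continuousAt
    have h2 : HasDerivAt (fun z => -∫ y in (1:ℝ)..z, gg y) (-(gg x)) x := h1.neg
    have h3 : (fun z => -∫ y in (1:ℝ)..z, gg y) = ψcf := by
      funext z
      rw [hψcdef]
      exact (intervalIntegral.integral_symm 1 z).symm
    rwa [h3] at h2
  have hψdiff : Differentiable ℝ ψcf := fun y => (hψcd y).differentiableAt
  have hψcc : Continuous ψcf := hψdiff.continuous
  have hψc1 : ψcf 1 = 0 := intervalIntegral.integral_same
  have hψeq : ∀ x ∈ Set.Icc (0:ℝ) 1, ψ x = ψcf x := by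
    intro x hx
    rw [hψ x]
    apply intervalIntegral.integral_congr
    intro y hy
    rw [uIcc_of_le hx.2] at hy
    apply intervalIntegral.integral_congr
    intro u hu
    rw [uIcc_of_le hy.2] at hu
    exact (hφceq u ⟨le_trans (le_trans hx.1 hy.1) hu.1, hu.2⟩).symm
  have hφcI : ∀ x ∈ Set.Icc (0:ℝ) 1, φc x = ifbmI α φc x / lam := by
    intro x hx
    rw [hφceq x hx, eq_div_iff hlam', mul_comm, ← hI x hx]
  have hφcd : ∀ x ∈ Set.Ioo (0:ℝ) 1, HasDerivAt φc (ifbmG α φc x / lam) x := by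
    intro x hx
    have hmem : Set.Icc (0:ℝ) 1 ∈ nhds x := Icc_mem_nhds hx.1 hx.2
    have hev : φc =ᶠ[nhds x] (fun z => ifbmI α φc z / lam) :=
      Filter.eventuallyEq_of_mem hmem hφcI
    exact ((hGd x).div_const lam).congr_of_eventuallyEq hev
  -- smoothness
  have hψcCD : ContDiffOn ℝ 4 ψcf (Set.Ioo 0 1) := by
    rw [show (4 : WithTop ℕ∞) = 3 + 1 by norm_num,
      contDiffOn_succ_iff_deriv_of_isOpen isOpen_Ioo]
    refine ⟨fun x _ => (hψcd x).differentiableAt.differentiableWithinAt, by simp, ?_⟩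
    have hd1 : deriv ψcf = fun x => -(gg x) := funext fun x => (hψcd x).deriv
    have hngg : ∀ x : ℝ, HasDerivAt (fun z => -(gg z)) (φc x) x := by
      intro x; exact (hggd x).neg.congr_deriv (neg_neg _)
    rw [hd1, show (3 : WithTop ℕ∞) = 2 + 1 by norm_num,
      contDiffOn_succ_iff_deriv_of_isOpen isOpen_Ioo]
    refine ⟨fun x _ => (hngg x).differentiableAt.differentiableWithinAt, by simp, ?_⟩
    have hd2 : deriv (fun z => -(gg z)) = φc := funext fun x => (hngg x).deriv
    rw [hd2, show (2 : WithTop ℕ∞) = 1 + 1 by norm_num,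
      contDiffOn_succ_iff_deriv_of_isOpen isOpen_Ioo]
    refine ⟨fun x hx => (hφcd x hx).differentiableAt.differentiableWithinAt, by simp, ?_⟩
    have hd3 : Set.EqOn (deriv φc) (fun z => ifbmG α φc z / lam) (Set.Ioo 0 1) :=
      fun x hx => (hφcd x hx).deriv
    refine ContDiffOn.congr ?_ hd3
    rw [show (1 : WithTop ℕ∞) = 0 + 1 by norm_num,
      contDiffOn_succ_iff_deriv_of_isOpen isOpen_Ioo]
    refine ⟨fun x _ => ((hDd x).div_const lam).differentiableAt.differentiableWithinAt,
      by simp, ?_⟩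
    have hd4 : deriv (fun z => ifbmG α φc z / lam) = fun z => ifbmD α φc z / lam :=
      funext fun x => ((hDd x).div_const lam).deriv
    rw [hd4, contDiffOn_zero]
    exact (hDcont.div_const lam).continuousOn
  have hCD : ContDiffOn ℝ 4 ψ (Set.Ioo 0 1) :=
    hψcCD.congr (fun x hx => hψeq x (Ioo_subset_Icc_self hx))
  -- iterated derivatives on the open interval
  have hu2 : UniqueDiffOn ℝ (Set.Ioo (0:ℝ) 1) := isOpen_Ioo.uniqueDiffOn
  have j1 : ∀ x ∈ Set.Ioo (0:ℝ) 1,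
      iteratedDerivWithin 1 ψ (Set.Ioo 0 1) x = -(gg x) := by
    intro x hx
    rw [iteratedDerivWithin_one]
    exact ((hψcd x).hasDerivWithinAt.congr
      (fun y hy => hψeq y (Ioo_subset_Icc_self hy))
      (hψeq x (Ioo_subset_Icc_self hx))).derivWithin (hu2 x hx)
  have j2 : ∀ x ∈ Set.Ioo (0:ℝ) 1,
      iteratedDerivWithin 2 ψ (Set.Ioo 0 1) x = φc x := by
    intro x hx
    rw [show (2:ℕ) = 1 + 1 from rfl, iteratedDerivWithin_succ,
      derivWithin_congr (fun y hy => j1 y hy) (j1 x hx)]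
    have h2 : HasDerivAt (fun z => -(gg z)) (φc x) x := (hggd x).neg.congr_deriv (neg_neg _)
    exact h2.hasDerivWithinAt.derivWithin (hu2 x hx)
  have j3 : ∀ x ∈ Set.Ioo (0:ℝ) 1,
      iteratedDerivWithin 3 ψ (Set.Ioo 0 1) x = ifbmG α φc x / lam := by
    intro x hx
    rw [show (3:ℕ) = 2 + 1 from rfl, iteratedDerivWithin_succ,
      derivWithin_congr (fun y hy => j2 y hy) (j2 x hx)]
    exact (hφcd x hx).hasDerivWithinAt.derivWithin (hu2 x hx)
  have j4 : ∀ x ∈ Set.Ioo (0:ℝ) 1,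
      iteratedDerivWithin 4 ψ (Set.Ioo 0 1) x = ifbmD α φc x / lam := by
    intro x hx
    rw [show (4:ℕ) = 3 + 1 from rfl, iteratedDerivWithin_succ,
      derivWithin_congr (fun y hy => j3 y hy) (j3 x hx)]
    exact ((hDd x).div_const lam).hasDerivWithinAt.derivWithin (hu2 x hx)
  -- integration by parts
  have hk1ycont : ∀ x : ℝ, Continuous (fun y => ifbmk1 α x y) :=
    ifbm_slice1_cont_snd hα0 hα1
  have hLd : ∀ x y : ℝ, HasDerivAt (fun y => ifbmL α x y) (ifbmk1 α x y) y := fun x y =>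
    intervalIntegral.integral_hasDerivAt_right ((hk1ycont x).intervalIntegrable _ _)
      ((hk1ycont x).stronglyMeasurableAtFilter _ _) (hk1ycont x).continuousAt
  have key : ∀ x ∈ Set.Ioo (0:ℝ) 1,
      cα * ∫ y in (0:ℝ)..1, |x - y| ^ (-α) * ψcf y = ifbmD α φc x := by
    intro x hx
    have hA : ∫ y in (0:ℝ)..1, ifbmk1 α x y * gg y = ifbmD α φc x := by
      have hPd : ∀ y : ℝ, HasDerivAt (fun y => ifbmL α x y * gg y)
          (ifbmk1 α x y * gg y + ifbmL α x y * (-(φc y))) y :=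
        fun y => (hLd x y).mul (hggd y)
      have hint1 : IntervalIntegrable (fun y => ifbmk1 α x y * gg y) volume 0 1 :=
        ((hk1ycont x).mul hggc).intervalIntegrable _ _
      have hint2 : IntervalIntegrable (fun y => ifbmL α x y * (-(φc y))) volume 0 1 :=
        ((ifbmL_cont_snd hα0 hα1 x).mul hφcC.neg).intervalIntegrable _ _
      have hFTC := intervalIntegral.integral_eq_sub_of_hasDerivAt
        (f := fun y => ifbmL α x y * gg y)
        (f' := fun y => ifbmk1 α x y * gg y + ifbmL α x y * (-(φc y)))
        (fun y _ => hPd y) (hint1.add hint2)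
      rw [intervalIntegral.integral_add hint1 hint2] at hFTC
      have hneg : ∫ y in (0:ℝ)..1, ifbmL α x y * (-(φc y))
          = -∫ y in (0:ℝ)..1, ifbmL α x y * φc y := by
        rw [← intervalIntegral.integral_neg]
        congr 1; funext y; ring
      have hL0 : ifbmL α x 0 = 0 := intervalIntegral.integral_same
      rw [hneg] at hFTC
      have hDrfl : (∫ y in (0:ℝ)..1, ifbmL α x y * φc y) = ifbmD α φc x := rfl
      rw [hDrfl] at hFTC
      simp only [hgg1, hL0, mul_zero, zero_mul, sub_zero] at hFTC
      linarith
    have hABd : ∀ y : ℝ, y ≠ x → HasDerivAt (fun y => ifbmk1 α x y * ψcf y)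
        (cα * |x - y| ^ (-α) * ψcf y + ifbmk1 α x y * (-(gg y))) y := by
      intro y hy
      have hne : x - y ≠ 0 := sub_ne_zero.2 (Ne.symm hy)
      have h1 := (ifbmk1_hasDeriv_snd (α := α) hne).mul (hψcd y)
      refine h1.congr_deriv ?_
      rw [hcα]
    have hQd_int : ∀ a b : ℝ, IntervalIntegrable
        (fun y => cα * |x - y| ^ (-α) * ψcf y + ifbmk1 α x y * (-(gg y))) volume a b := by
      intro a b
      refine IntervalIntegrable.add ?_ (((hk1ycont x).mul hggc.neg).intervalIntegrable _ _)
      have h1 : IntervalIntegrable (fun y => |x - y| ^ (-α) * ψcf y) volume a b :=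
        (ifbm_absInt' hα0 hα1 x a b).mul_continuousOn hψcc.continuousOn
      have h2 := h1.const_mul cα
      simpa [mul_assoc] using h2
    have hB1 := intervalIntegral.integral_eq_sub_of_hasDeriv_right_of_le hx.1.le
      (f := fun y => ifbmk1 α x y * ψcf y)
      (((hk1ycont x).mul hψcc).continuousOn)
      (fun y hy => ((hABd y (ne_of_lt hy.2)).hasDerivWithinAt))
      (hQd_int 0 x)
    have hB2 := intervalIntegral.integral_eq_sub_of_hasDeriv_right_of_le hx.2.le
      (f := fun y => ifbmk1 α x y * ψcf y)
      (((hk1ycont x).mul hψcc).continuousOn)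
      (fun y hy => ((hABd y (ne_of_gt hy.1)).hasDerivWithinAt))
      (hQd_int x 1)
    have hk10 : ifbmk1 α x 0 = 0 := by
      unfold ifbmk1
      rw [sub_zero, ifbmH_pos hx.1]
      ring
    have hsum := intervalIntegral.integral_add_adjacent_intervals (hQd_int 0 x) (hQd_int x 1)
    rw [hB1, hB2] at hsum
    simp only [hk10, hψc1, mul_zero, zero_mul, sub_zero] at hsum
    have hQzero : ∫ y in (0:ℝ)..1,
        (cα * |x - y| ^ (-α) * ψcf y + ifbmk1 α x y * (-(gg y))) = 0 := by
      rw [← hsum]; ring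
    have hsing : IntervalIntegrable (fun y => cα * |x - y| ^ (-α) * ψcf y) volume 0 1 := by
      have h1 := ((ifbm_absInt' hα0 hα1 x 0 1).mul_continuousOn hψcc.continuousOn).const_mul cα
      simpa [mul_assoc] using h1
    rw [intervalIntegral.integral_add (g := fun y => ifbmk1 α x y * (-(gg y))) hsing
      (((hk1ycont x).mul hggc.neg).intervalIntegrable _ _)] at hQzero
    have e1 : ∫ y in (0:ℝ)..1, cα * |x - y| ^ (-α) * ψcf y
        = cα * ∫ y in (0:ℝ)..1, |x - y| ^ (-α) * ψcf y := by
      rw [← intervalIntegral.integral_const_mul]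
      congr 1; funext y; ring
    have e2 : ∫ y in (0:ℝ)..1, ifbmk1 α x y * (-(gg y))
        = -∫ y in (0:ℝ)..1, ifbmk1 α x y * gg y := by
      rw [← intervalIntegral.integral_neg]
      congr 1; funext y; ring
    rw [e1, e2, hA] at hQzero
    linarith
  -- boundary data
  have hu1 : UniqueDiffOn ℝ (Set.Icc (0:ℝ) 1) := uniqueDiffOn_Icc one_pos
  have h0mem : (0:ℝ) ∈ Set.Icc (0:ℝ) 1 := ⟨le_rfl, h01⟩
  have h1mem : (1:ℝ) ∈ Set.Icc (0:ℝ) 1 := ⟨h01, le_rfl⟩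
  have e1 : ∀ z ∈ Set.Icc (0:ℝ) 1,
      iteratedDerivWithin 1 ψ (Set.Icc 0 1) z = -(gg z) := by
    intro z hz
    rw [iteratedDerivWithin_one]
    exact ((hψcd z).hasDerivWithinAt.congr (fun y hy => hψeq y hy)
      (hψeq z hz)).derivWithin (hu1 z hz)
  have e2 : ∀ z ∈ Set.Icc (0:ℝ) 1,
      iteratedDerivWithin 2 ψ (Set.Icc 0 1) z = φc z := by
    intro z hz
    rw [show (2:ℕ) = 1 + 1 from rfl, iteratedDerivWithin_succ,
      derivWithin_congr (fun y hy => e1 y hy) (e1 z hz)]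
    have h2 : HasDerivAt (fun w => -(gg w)) (φc z) z := (hggd z).neg.congr_deriv (neg_neg _)
    exact h2.hasDerivWithinAt.derivWithin (hu1 z hz)
  refine ⟨hCD, ?_, ?_, ?_, ?_, ?_⟩
  · intro x hx
    have hψint : ∫ y in (0:ℝ)..1, |x - y| ^ (-α) * ψ y
        = ∫ y in (0:ℝ)..1, |x - y| ^ (-α) * ψcf y := by
      apply intervalIntegral.integral_congr
      intro y hy
      rw [uIcc_of_le h01] at hy
      show |x - y| ^ (-α) * ψ y = |x - y| ^ (-α) * ψcf y
      rw [hψeq y hy]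
    rw [hψint, key x hx, j4 x hx]
    field_simp
  · rw [hψ 1, intervalIntegral.integral_same]
  · have h := ((hψcd 1).hasDerivWithinAt.congr (fun y hy => hψeq y hy)
      (hψeq 1 h1mem)).derivWithin (hu1 1 h1mem)
    rw [h, hgg1, neg_zero]
  · rw [e2 0 h0mem, hφceq 0 h0mem, hφ0]
  · rw [show (3:ℕ) = 2 + 1 from rfl, iteratedDerivWithin_succ,
      derivWithin_congr (fun y hy => e2 y hy) (e2 0 h0mem)]
    have h3 : HasDerivWithinAt φc (ifbmG α φc 0 / lam) (Set.Icc 0 1) 0 :=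
      (((hGd 0).div_const lam).hasDerivWithinAt).congr
        (fun z hz => hφcI z hz) (hφcI 0 h0mem)
    rw [h3.derivWithin (hu1 0 h0mem), hG0, zero_div]
end
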